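/- arXiv:2201.06144 — 7 statements merged into one kernel-verified Lean document; each statement's English description precedes it below -/
import Mathlib

section
/- (Hales–Jewett) For every integer r > 0 and every finite set P, there exists N > 0 such that for every coloring χ : P^N → {0,…,r−1} there is a combinatorial line ℓ in P^N such that χ is constant on the set of tuples lying on ℓ, i.e., constant on {ℓ ∘ p : p ∈ P} where ℓ ∘ p ∈ P^N is defined by (ℓ ∘ p)_i = p if i ∈ d(ℓ) and (ℓ ∘ p)_i = ℓ_i otherwise. -/
/-- A combinatorial line `ℓ` in `P^N`: a nonempty set `d(ℓ) ⊆ {0,…,N−1}` of moving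
coordinates together with fixed values `ℓ_k ∈ P` for each `k ∉ d(ℓ)`. -/
structure Line (P : Type*) (N : ℕ) where
  d : Set (Fin N)
  d_nonempty : d.Nonempty
  fixed : ∀ i : Fin N, i ∉ d → P

/-- The tuple `ℓ ∘ p` obtained by putting `p` on the moving coordinates of `ℓ`.
The tuples lying on `ℓ` are exactly those of the form `ℓ.act p`. -/
noncomputable def Line.act {P : Type*} {N : ℕ} (ℓ : Line P N) (p : P) : Fin N → P :=
  fun i => @dite _ (i ∈ ℓ.d) (Classical.dec _) (fun _ => p) (fun h => ℓ.fixed i h)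

/-- **Hales–Jewett**: for every `r > 0` and every finite set `P` there is `N > 0` such that
every `r`-coloring of `P^N` is constant on some combinatorial line. -/
theorem hales_jewett (r : ℕ) (hr : 0 < r) (P : Type) [Finite P] :
    ∃ N : ℕ, 0 < N ∧ ∀ χ : (Fin N → P) → Fin r,
      ∃ ℓ : Line P N, ∃ c : Fin r, ∀ p : P, χ (ℓ.act p) = c := by
  cases isEmpty_or_nonempty P with
  | inl h =>
    refine ⟨1, one_pos, fun χ => ⟨⟨Set.univ, ⟨0, trivial⟩, fun i hi => absurd trivial hi⟩,
      ⟨0, hr⟩, fun p => h.elim p⟩⟩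
  | inr h =>
    obtain ⟨ι, hfin, hmono⟩ := Combinatorics.Line.exists_mono_in_high_dimension P (Fin r)
    refine ⟨Nat.card ι, ?_, fun χ => ?_⟩
    · have : Nonempty ι := by
        obtain ⟨l, _⟩ := hmono (fun _ => ⟨0, hr⟩)
        exact ⟨l.proper.choose⟩
      exact Nat.card_pos
    · have e : Fin (Nat.card ι) ≃ ι := (Finite.equivFin ι).symm
      obtain ⟨l, c, hc⟩ := hmono (fun f => χ (f ∘ e))
      obtain ⟨i0, hi0⟩ := l.proper
      refine ⟨⟨{i | l.idxFun (e i) = none}, ⟨e.symm i0, by simpa using hi0⟩,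
        fun i hi => (l.idxFun (e i)).get (by cases hh : l.idxFun (e i) <;> simp_all)⟩,
        c, fun p => ?_⟩
      have : ∀ f : Fin (Nat.card ι) → P, f = (l p) ∘ e → χ f = c := by
        rintro f rfl; exact hc p
      apply this
      funext i
      simp only [Line.act, Function.comp_apply, Combinatorics.Line.apply_def]
      split
      · next hh => simp [Set.mem_setOf_eq] at hh; simp [hh]
      · next hh =>
        simp only [Set.mem_setOf_eq] at hh
        obtain ⟨a, hg⟩ := Option.ne_none_iff_exists'.mp hh
        simp [hg]
end

section
/- (Transfer Lemma) Let 𝒞 and 𝒟 be categories and r > 0 an integer. Suppose A, B, C ∈ Ob(𝒞) satisfy C → (B)^A_r in 𝒞, let D, E ∈ Ob(𝒟), and let F : Hom_𝒞(A, B) → Hom_𝒟(D, E) be a surjection. Suppose there exist an object W of 𝒟, a morphism φ_h : D → W for each h ∈ Hom_𝒞(A, C), and a morphism ψ_g : E → W for each g ∈ Hom_𝒞(B, C), such that ψ_g ∘ F(f) = φ_{g∘f} for all f ∈ Hom_𝒞(A, B) and all g ∈ Hom_𝒞(B, C) (i.e., W together with these morphisms is a cocone over the transfer diagram). Then W → (E)^D_r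 in 𝒟. -/
open CategoryTheory

universe v u v' u'

/-- `C → (B)^A_r`: every `r`-coloring of `Hom(A, C)` is constant on
`{g ∘ f : f ∈ Hom(A, B)}` for some `g ∈ Hom(B, C)`. -/
def RamseyArrow {D : Type u} [Category.{v} D] (A B Z : D) (r : ℕ) : Prop :=
  ∀ χ : (A ⟶ Z) → Fin r, ∃ g : B ⟶ Z, ∃ c : Fin r, ∀ f : A ⟶ B, χ (f ≫ g) = c

/-- **Transfer Lemma**: if `C → (B)^A_r` in `𝒞`, `F : Hom_𝒞(A,B) → Hom_𝒟(D,E)` is surjective,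
and `W` carries a cocone over the transfer diagram (morphisms `φ_h : D ⟶ W` for
`h ∈ Hom(A,C)` and `ψ_g : E ⟶ W` for `g ∈ Hom(B,C)` with `ψ_g ∘ F(f) = φ_{g∘f}`),
then `W → (E)^D_r` in `𝒟`. -/
theorem transfer_lemma {C : Type u} [Category.{v} C] {D : Type u'} [Category.{v'} D]
    (r : ℕ) (hr : 0 < r)
    (A B Cw : C) (hRamsey : RamseyArrow A B Cw r)
    (Dd E : D)
    (F : (A ⟶ B) → (Dd ⟶ E)) (hF : Function.Surjective F)
    (W : D)
    (φ : (A ⟶ Cw) → (Dd ⟶ W)) (ψ : (B ⟶ Cw) → (E ⟶ W))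
    (hcocone : ∀ (f : A ⟶ B) (g : B ⟶ Cw), F f ≫ ψ g = φ (f ≫ g)) :
    RamseyArrow Dd E W r := by
  intro χ
  obtain ⟨g, c, hc⟩ := hRamsey (fun h => χ (φ h))
  refine ⟨ψ g, c, fun e => ?_⟩
  obtain ⟨f, rfl⟩ := hF e
  rw [hcocone f g, hc f]
end

section
/- (Partite Lemma) Let 𝒞 be a category such that Hom_𝒞(X, Y) is finite for all objects X, Y, and such that 𝒞 has colimits over all diagrams G : J → 𝒞 whose index category J has a finite set of objects. Fix a 𝒞-language ℒ and let i₀ ∈ Hom(𝒞) have a left inverse in 𝒞. Then for any integer r > 0, any monic domain object 𝒳 of Bl^m_{i₀}, and any codomain object 𝒴 of Bl^m_{i₀}, there exists an object 𝒵 of Bl^m_{i₀} such that 𝒵 → (𝒴)^𝒳_r in the category Bl^m_{i₀}. -/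
open CategoryTheory

universe v u

/-- A `𝒞`-language: a set of relation symbols with arities objects of `𝒞`, and a set of
function symbols with arities pairs of objects of `𝒞`. -/
structure CLanguage (C : Type u) [Category.{v} C] where
  Rel : Type
  Fn : Type
  arR : Rel → C
  arF1 : Fn → C
  arF2 : Fn → C

/-- An `ℒ`-structure: an object `X` of `𝒞` with `R^𝖷 ⊆ Hom(r, X)` for each relation
symbol `R` of arity `r`, and `F^𝖷 : Hom(X, r) → Hom(X, s)` for each function symbol `F`
of arity `(r, s)`. -/
structure LStr {C : Type u} [Category.{v} C] (L : CLanguage C) where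
  X : C
  rel : ∀ R : L.Rel, Set (L.arR R ⟶ X)
  fn : ∀ F : L.Fn, (X ⟶ L.arF1 F) → (X ⟶ L.arF2 F)

/-- `f : A.X ⟶ B.X` is an `ℒ`-homomorphism: `R^𝖠(η) ⟺ R^𝖡(f ∘ η)` and
`F^𝖠(γ ∘ f) = F^𝖡(γ) ∘ f`. -/
def IsLHom {C : Type u} [Category.{v} C] {L : CLanguage C} (A B : LStr L)
    (f : A.X ⟶ B.X) : Prop :=
  (∀ (R : L.Rel) (η : L.arR R ⟶ A.X), η ∈ A.rel R ↔ (η ≫ f) ∈ B.rel R) ∧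
  (∀ (F : L.Fn) (γ : B.X ⟶ L.arF1 F), A.fn F (f ≫ γ) = f ≫ B.fn F γ)

/-- `f` has a left inverse in `𝒞`. -/
def HasLeftInv {C : Type u} [Category.{v} C] {X Y : C} (f : X ⟶ Y) : Prop :=
  ∃ g : Y ⟶ X, f ≫ g = 𝟙 X

/-- An object of the category `Bl_{i₀}` (equivalently of `Bl^m_{i₀}`): either a domain
object, a block over `U`, or a codomain object, a block over `V`. -/
inductive BlObj {C : Type u} [Category.{v} C] (L : CLanguage C) (U V : C) :
    Type (max u v)
  | dom (S : LStr L) (π : S.X ⟶ U) : BlObj L U V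
  | cod (S : LStr L) (ρ : S.X ⟶ V) : BlObj L U V

/-- The underlying `𝒞`-object of a block. -/
def BlObj.car {C : Type u} [Category.{v} C] {L : CLanguage C} {U V : C} :
    BlObj L U V → C
  | .dom S _ => S.X
  | .cod S _ => S.X

/-- `f` is a morphism of `Bl_{i₀}` from `A` to `B`: between domain objects it is an
`Id_U`-homomorphism, from a domain object to a codomain object an `i₀`-homomorphism,
and between codomain objects an `Id_V`-homomorphism. -/
def BlHom {C : Type u} [Category.{v} C] {L : CLanguage C} {U V : C} (i₀ : U ⟶ V) :
    ∀ A B : BlObj L U V, (A.car ⟶ B.car) → Prop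
  | .dom S π, .dom S' π', f => IsLHom S S' f ∧ f ≫ π' = π ≫ 𝟙 U
  | .dom S π, .cod S' ρ', f => IsLHom S S' f ∧ f ≫ ρ' = π ≫ i₀
  | .cod S ρ, .cod S' ρ', f => IsLHom S S' f ∧ f ≫ ρ' = ρ ≫ 𝟙 V
  | .cod _ _, .dom _ _, _ => False


section PartiteAux

open Combinatorics CategoryTheory.Limits

universe w

/-- The relation underlying the bipartite "lines" diagram. -/
def LineRel {α : Type w} {ι : Type} :
    ((ι → α) ⊕ Line α ι) → ((ι → α) ⊕ Line α ι) → Prop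
  | .inl w, .inl w' => w = w'
  | .inl w, .inr l => ∃ x : α, (fun i => (l.idxFun i).getD x) = w
  | .inr l, .inr l' => l = l'
  | .inr _, .inl _ => False

theorem LineRel.refl' {α : Type w} {ι : Type} (a : (ι → α) ⊕ Line α ι) : LineRel a a := by
  cases a
  · exact rfl
  · exact rfl

theorem LineRel.trans' {α : Type w} {ι : Type} {a b c : (ι → α) ⊕ Line α ι}
    (h1 : LineRel a b) (h2 : LineRel b c) : LineRel a c := by
  cases a <;> cases b <;> cases c
  · exact h1.trans h2
  · exact (show _ = _ from h1) ▸ h2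
  · exact (show False from h2).elim
  · exact (show _ = _ from h2) ▸ h1
  · exact (show False from h1).elim
  · exact (show False from h1).elim
  · exact (show False from h2).elim
  · exact (show _ = _ from h1) ▸ h2

instance lineCatCategory {α : Type w} {ι : Type} : Category.{w} ((ι → α) ⊕ Line α ι) where
  Hom a b := ULift.{w} (PLift (LineRel a b))
  id a := ⟨⟨LineRel.refl' a⟩⟩
  comp f g := ⟨⟨LineRel.trans' f.down.down g.down.down⟩⟩

instance lineCatHomSubsingleton {α : Type w} {ι : Type} (a b : (ι → α) ⊕ Line α ι) :
    Subsingleton (a ⟶ b) := ⟨by rintro ⟨⟨p⟩⟩ ⟨⟨q⟩⟩; rfl⟩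

instance optionFinite {α : Type w} [Finite α] : Finite (Option α) :=
  Finite.of_equiv (α ⊕ PUnit.{1}) (Equiv.optionEquivSumPUnit.{0} α).symm

instance lineFinite {α : Type w} {ι : Type} [Finite α] [Finite ι] : Finite (Line α ι) := by
  refine Finite.of_injective (fun l => l.idxFun) ?_
  rintro ⟨f, hf⟩ ⟨g, hg⟩ h
  simp only at h; subst h; rfl

variable {C : Type u} [Category.{v} C]

/-- The diagram sending points to `X` and lines to `Y`. -/
noncomputable def lineDiag {X Y : C} {ι : Type} (P : Type v) (val : P → (X ⟶ Y)) :
    ((ι → P) ⊕ Line P ι) ⥤ C where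
  obj a := match a with
    | .inl _ => X
    | .inr _ => Y
  map {a b} h := match a, b, h with
    | .inl _, .inl _, _ => 𝟙 X
    | .inl w, .inr l, _ => val (w l.proper.choose)
    | .inr _, .inr _, _ => 𝟙 Y
    | .inr _, .inl _, h => (h.down.down).elim
  map_id a := by cases a <;> rfl
  map_comp {a b c} f g := by
    obtain ⟨⟨hf⟩⟩ := f
    obtain ⟨⟨hg⟩⟩ := g
    cases a <;> cases b <;> cases c
    · exact (Category.id_comp _).symm
    · obtain rfl : _ = _ := hf
      exact (Category.id_comp _).symm
    · exact (show False from hg).elim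
    · obtain rfl : _ = _ := hg
      exact (Category.comp_id _).symm
    · exact (show False from hf).elim
    · exact (show False from hf).elim
    · exact (show False from hg).elim
    · exact (Category.comp_id _).symm

theorem lineDiag_map_inl_inr {X Y : C} {ι : Type} {P : Type v} (val : P → (X ⟶ Y))
    {w : ι → P} {l : Line P ι}
    (h : (Sum.inl w : (ι → P) ⊕ Line P ι) ⟶ Sum.inr l) :
    (lineDiag P val).map h = val (w l.proper.choose) := by
  obtain ⟨⟨hh⟩⟩ := h; rfl

theorem lineDiag_map_line {X Y : C} {ι : Type} {P : Type v} (val : P → (X ⟶ Y))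
    {w : ι → P} {l : Line P ι} {x : P}
    (hx : (fun i => (l.idxFun i).getD x) = w)
    (h : (Sum.inl w : (ι → P) ⊕ Line P ι) ⟶ Sum.inr l) :
    (lineDiag P val).map h = val x := by
  rw [lineDiag_map_inl_inr]
  rw [← hx]
  simp [l.proper.choose_spec]
  rfl

/-- Building cocones over the lines diagram. -/
noncomputable def lineCocone {X Y W : C} {ι : Type} (P : Type v) (val : P → (X ⟶ Y))
    (uX : (ι → P) → (X ⟶ W)) (uY : Line P ι → (Y ⟶ W))
    (hcomp : ∀ (w : ι → P) (l : Line P ι) (x : P),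
      (fun i => (l.idxFun i).getD x) = w → val x ≫ uY l = uX w) :
    Cocone (lineDiag (ι := ι) P val) where
  pt := W
  ι :=
    { app := fun a => match a with
        | .inl w => uX w
        | .inr l => uY l
      naturality := by
        rintro a b h
        obtain ⟨⟨hh⟩⟩ := h
        cases a <;> cases b
        · obtain rfl : _ = _ := hh
          exact (Category.id_comp _).trans (Category.comp_id _).symm
        · obtain ⟨x, hx⟩ := hh
          rw [lineDiag_map_line val hx]
          exact (hcomp _ _ _ hx).trans (Category.comp_id _).symm
        · exact (show False from hh).elim
        · obtain rfl : _ = _ := hh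
          exact (Category.id_comp _).trans (Category.comp_id _).symm }

@[simp] theorem lineCocone_app_inl {X Y W : C} {ι : Type} (P : Type v) (val : P → (X ⟶ Y))
    (uX : (ι → P) → (X ⟶ W)) (uY : Line P ι → (Y ⟶ W)) (hcomp) (w : ι → P) :
    (lineCocone P val uX uY hcomp).ι.app (Sum.inl w) = uX w := rfl

@[simp] theorem lineCocone_app_inr {X Y W : C} {ι : Type} (P : Type v) (val : P → (X ⟶ Y))
    (uX : (ι → P) → (X ⟶ W)) (uY : Line P ι → (Y ⟶ W)) (hcomp) (l : Line P ι) :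
    (lineCocone P val uX uY hcomp).ι.app (Sum.inr l) = uY l := rfl

end PartiteAux

/-- **Partite Lemma**: let `𝒞` have finite hom-sets and colimits over all diagrams whose
index category has a finite set of objects, let `ℒ` be a `𝒞`-language and let
`i₀ : U ⟶ V` have a left inverse. Then for every `r > 0`, every monic domain object
`𝒳 = (𝖷, π)` of `Bl^m_{i₀}` and every codomain object `𝒴 = (𝖸, ρ)` of `Bl^m_{i₀}` there
is an object `𝒵` of `Bl^m_{i₀}` with `𝒵 → (𝒴)^𝒳_r` in `Bl^m_{i₀}`: for every
`r`-coloring `χ` of morphisms `𝒳 ⟶ 𝒵`, there is a morphism `g : 𝒴 ⟶ 𝒵` of `Bl^m_{i₀}`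
such that `χ (g ∘ f)` is constant as `f` ranges over `Hom_{Bl^m_{i₀}}(𝒳, 𝒴)`. -/
theorem partite_lemma
    {C : Type u} [Category.{v} C]
    (hfin : ∀ X Y : C, Finite (X ⟶ Y))
    (hcolim : ∀ (J : Type v) [Category.{v} J], Finite J → Limits.HasColimitsOfShape J C)
    (L : CLanguage C) {U V : C} (i₀ : U ⟶ V) (hi₀ : HasLeftInv i₀)
    (r : ℕ) (hr : 0 < r)
    (SX SY : LStr L) (π : SX.X ⟶ U) (ρ : SY.X ⟶ V) (hπ : HasLeftInv π) :
    ∃ Z : BlObj L U V,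
      ∀ χ : (SX.X ⟶ Z.car) → Fin r,
        ∃ g : SY.X ⟶ Z.car,
          (BlHom i₀ (BlObj.cod SY ρ) Z g ∧ HasLeftInv g) ∧
          ∃ c : Fin r, ∀ f : SX.X ⟶ SY.X,
            (BlHom i₀ (BlObj.dom SX π) (BlObj.cod SY ρ) f ∧ HasLeftInv f) →
              χ (f ≫ g) = c := by
  classical
  haveI : Finite (SX.X ⟶ SY.X) := hfin _ _
  obtain ⟨sV, hsV⟩ := hi₀
  obtain ⟨sU, hsU⟩ := hπ
  -- the set of "block morphisms" from the domain block to the codomain block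
  let P : Type v := {f : SX.X ⟶ SY.X // IsLHom SX SY f ∧ f ≫ ρ = π ≫ i₀}
  haveI : Finite P := Subtype.finite
  let val : P → (SX.X ⟶ SY.X) := Subtype.val
  -- the uniform retraction of every element of `P`
  let rY : SY.X ⟶ SX.X := ρ ≫ sV ≫ sU
  have hrY : ∀ x : P, val x ≫ rY = 𝟙 SX.X := by
    intro x
    calc val x ≫ rY = (val x ≫ ρ) ≫ sV ≫ sU := by simp [rY]
      _ = (π ≫ i₀) ≫ sV ≫ sU := by rw [x.2.2]
      _ = π ≫ (i₀ ≫ sV) ≫ sU := by simp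
      _ = π ≫ sU := by rw [hsV, Category.id_comp]
      _ = 𝟙 SX.X := hsU
  -- Hales–Jewett
  obtain ⟨ι, hι, hHJ⟩ := Combinatorics.Line.exists_mono_in_high_dimension P (Fin r)
  haveI := hι
  haveI : Limits.HasColimitsOfShape ((ι → P) ⊕ Combinatorics.Line P ι) C :=
    hcolim _ inferInstance
  let D := lineDiag (ι := ι) P val
  let Zc := Limits.colimit D
  let ιX : (ι → P) → (SX.X ⟶ Zc) := fun w => Limits.colimit.ι D (Sum.inl w)
  let ιY : Combinatorics.Line P ι → (SY.X ⟶ Zc) := fun l => Limits.colimit.ι D (Sum.inr l)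
  have hw : ∀ (w : ι → P) (l : Combinatorics.Line P ι) (x : P),
      (fun i => (l.idxFun i).getD x) = w → val x ≫ ιY l = ιX w := by
    intro w l x hx
    have harr : (Sum.inl w : (ι → P) ⊕ Combinatorics.Line P ι) ⟶ Sum.inr l := ⟨⟨⟨x, hx⟩⟩⟩
    have h2 := Limits.colimit.w D harr
    rwa [lineDiag_map_line val hx harr] at h2
  -- the `ℒ`-structure on the colimit
  let fnCoc : (F : L.Fn) → (Zc ⟶ L.arF1 F) → Limits.Cocone D := fun F γ =>
    lineCocone P val (fun w => SX.fn F (ιX w ≫ γ)) (fun l => SY.fn F (ιY l ≫ γ)) (by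
      intro w l x hx
      rw [← x.2.1.2 F (ιY l ≫ γ), ← Category.assoc, hw w l x hx])
  let SZ : LStr L :=
    { X := Zc
      rel := fun R => {η | ∃ l η', η' ∈ SY.rel R ∧ η = η' ≫ ιY l}
      fn := fun F γ => Limits.colimit.desc D (fnCoc F γ) }
  let ρCoc : Limits.Cocone D := lineCocone P val
    (fun _ => π ≫ i₀) (fun _ => ρ) (fun w l x hx => x.2.2)
  let ρZ : Zc ⟶ V := Limits.colimit.desc D ρCoc
  -- the coordinate retractions
  have mkq : ∀ j : ι, ∃ q : Zc ⟶ SY.X, ∀ l' : Combinatorics.Line P ι,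
      ιY l' ≫ q = (l'.idxFun j).elim (𝟙 SY.X) (fun e => rY ≫ val e) := by
    intro j
    refine ⟨Limits.colimit.desc D (lineCocone P val (fun w => val (w j))
      (fun l' => (l'.idxFun j).elim (𝟙 SY.X) (fun e => rY ≫ val e)) ?_),
      fun l' => Limits.colimit.ι_desc _ _⟩
    intro w l' x hx
    show val x ≫ (l'.idxFun j).elim (𝟙 SY.X) (fun e => rY ≫ val e) = val (w j)
    cases hc : l'.idxFun j with
    | none =>
      have hwj : w j = x := by rw [← hx]; simp [hc]
      rw [hwj]
      simp
    | some e =>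
      have hwj : w j = e := by rw [← hx]; simp [hc]
      rw [hwj]
      show val x ≫ rY ≫ val e = val e
      rw [← Category.assoc, hrY x, Category.id_comp]
  -- the global retraction onto `X`
  obtain ⟨RX, hRX⟩ : ∃ R : Zc ⟶ SX.X, ∀ l' : Combinatorics.Line P ι, ιY l' ≫ R = rY :=
    ⟨Limits.colimit.desc D (lineCocone P val (fun _ => 𝟙 SX.X) (fun _ => rY)
      (fun w l x hx => hrY x)), fun l' => Limits.colimit.ι_desc _ _⟩
  refine ⟨BlObj.cod SZ ρZ, ?_⟩
  intro χ
  obtain ⟨l, c, hl⟩ := hHJ (fun w => χ (ιX w))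
  obtain ⟨j₀, hj₀⟩ := l.proper
  obtain ⟨q₀, hq₀⟩ := mkq j₀
  have hq₀l : ιY l ≫ q₀ = 𝟙 SY.X := by rw [hq₀ l, hj₀]; rfl
  refine ⟨ιY l, ⟨⟨⟨?_, ?_⟩, ?_⟩, q₀, hq₀l⟩, c, ?_⟩
  · -- relation condition
    intro R η
    constructor
    · intro h
      exact ⟨l, η, h, rfl⟩
    · rintro ⟨l', η'', hmem, heq⟩
      obtain ⟨i₂, hi₂⟩ := l'.proper
      obtain ⟨q₂, hq₂⟩ := mkq i₂
      have hq₂l' : ιY l' ≫ q₂ = 𝟙 SY.X := by rw [hq₂ l', hi₂]; rfl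
      have e1 : η = η'' ≫ (ιY l' ≫ q₀) := by
        calc η = η ≫ (ιY l ≫ q₀) := by rw [hq₀l, Category.comp_id]
          _ = (η ≫ ιY l) ≫ q₀ := by rw [Category.assoc]
          _ = (η'' ≫ ιY l') ≫ q₀ := by rw [heq]
          _ = η'' ≫ (ιY l' ≫ q₀) := by rw [Category.assoc]
      have e2 : η'' = η ≫ (ιY l ≫ q₂) := by
        calc η'' = η'' ≫ (ιY l' ≫ q₂) := by rw [hq₂l', Category.comp_id]
          _ = (η'' ≫ ιY l') ≫ q₂ := by rw [Category.assoc]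
          _ = (η ≫ ιY l) ≫ q₂ := by rw [heq]
          _ = η ≫ (ιY l ≫ q₂) := by rw [Category.assoc]
      cases hc1 : l'.idxFun j₀ with
      | none =>
        have : η = η'' := by rw [e1, hq₀ l', hc1]; simp
        rwa [this]
      | some e =>
        have hηe : η = (η'' ≫ rY) ≫ val e := by
          rw [e1, hq₀ l', hc1]; simp
        cases hc2 : l.idxFun i₂ with
        | none =>
          have h3 : η'' = η := by rw [e2, hq₂ l, hc2]; simp
          exact h3 ▸ hmem
        | some e' =>
          have hη''e : η'' = (η ≫ rY) ≫ val e' := by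
            rw [e2, hq₂ l, hc2]; simp
          have hζ : η ≫ rY = η'' ≫ rY := by
            calc η ≫ rY = η ≫ (ιY l ≫ RX) := by rw [hRX l]
              _ = (η ≫ ιY l) ≫ RX := by rw [Category.assoc]
              _ = (η'' ≫ ιY l') ≫ RX := by rw [heq]
              _ = η'' ≫ (ιY l' ≫ RX) := by rw [Category.assoc]
              _ = η'' ≫ rY := by rw [hRX l']
          have hX : (η ≫ rY) ∈ SX.rel R := by
            refine (e'.2.1.1 R (η ≫ rY)).2 ?_
            rw [← hη''e]; exact hmem
          have hY : ((η ≫ rY) ≫ val e) ∈ SY.rel R := (e.2.1.1 R (η ≫ rY)).1 hX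
          rw [hηe, ← hζ]
          exact hY
  · -- function condition
    intro F γ
    exact (Limits.colimit.ι_desc (fnCoc F γ) (Sum.inr l)).symm
  · -- compatibility with the block projections
    rw [Category.comp_id]
    exact Limits.colimit.ι_desc ρCoc (Sum.inr l)
  · -- monochromaticity
    intro f hf
    have hf' : IsLHom SX SY f ∧ f ≫ ρ = π ≫ i₀ := hf.1
    have harr := hw (fun i => (l.idxFun i).getD ⟨f, hf'⟩) l ⟨f, hf'⟩ rfl
    have : χ (f ≫ ιY l) = χ (ιX (fun i => (l.idxFun i).getD ⟨f, hf'⟩)) := by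
      exact congrArg χ harr
    rw [this]
    exact hl ⟨f, hf'⟩
end

section
/- (Partite Construction) Let 𝒞 and 𝒟 be categories and let G : 𝒟 → 𝒞 be a functor such that: (1) Hom_𝒞(X, Y) is finite for all objects X, Y of 𝒞, and Hom_𝒟(K, L) is finite for all objects K, L of 𝒟; (2) G(f) has a left inverse in 𝒞 for every f ∈ Hom(𝒟); (3) 𝒞 has a colimit over every functor F : J → 𝒞 where Ob(J) is finite; (4) 𝒟 has the Ramsey property. Fix a 𝒞-language ℒ. Then for any integer r > 0, any monic 𝒟-block 𝚇 ∈ Ob(Bl^m_𝒟), and any 𝒟-block 𝚈 ∈ Ob(Bl^m_𝒟), there exists a 𝒟-block 𝚉 ∈ Ob(Bl^m_𝒟) such that 𝚉 → (𝚈)^𝚇_r in the category Bl^m_𝒟. -/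
open CategoryTheory

universe v u v' u'

/-- A `𝒟`-block (an object of `Bl^m_𝒟`): a triple `(𝖷, π, K)` with `𝖷` an
`ℒ`-structure, `K ∈ Ob(𝒟)` and `π : X ⟶ G(K)` in `𝒞`. -/
structure DBlock {C : Type u} [Category.{v} C] {D : Type u'} [Category.{v'} D]
    (L : CLanguage C) (G : D ⥤ C) where
  S : LStr L
  K : D
  π : S.X ⟶ G.obj K

/-- `f` is a morphism of `Bl^m_𝒟` from `(𝖷, π, K)` to `(𝖸, ρ, L)`: an
`ℒ`-homomorphism with a left inverse in `𝒞` such that `ρ ∘ f = G(i) ∘ π` for some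
`i : K ⟶ L` in `𝒟`. -/
def DBlockHom {C : Type u} [Category.{v} C] {D : Type u'} [Category.{v'} D]
    {L : CLanguage C} {G : D ⥤ C} (A B : DBlock L G) (f : A.S.X ⟶ B.S.X) : Prop :=
  IsLHom A.S B.S f ∧ HasLeftInv f ∧ ∃ i : A.K ⟶ B.K, f ≫ B.π = A.π ≫ G.map i

open Combinatorics CategoryTheory.Limits

namespace PartiteAux

instance {A : Type u} [Finite A] : Finite (Option A) :=
  Finite.of_equiv (A ⊕ PUnit.{1}) (Equiv.optionEquivSumPUnit A).symm

instance {A : Type u} {ι : Type u'} [Finite A] [Finite ι] : Finite (Line A ι) :=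
  Finite.of_injective (fun l => l.idxFun) (fun l l' hh => by
    cases l; cases l'
    simp only at hh
    cases hh
    rfl)

variable {C : Type u} [Category.{v} C]

lemma hasLeftInv_id {X : C} : HasLeftInv (𝟙 X) := ⟨𝟙 X, by simp⟩

lemma hasLeftInv_comp {X Y Z : C} {f : X ⟶ Y} {g : Y ⟶ Z}
    (hf : HasLeftInv f) (hg : HasLeftInv g) : HasLeftInv (f ≫ g) := by
  obtain ⟨f', hf'⟩ := hf
  obtain ⟨g', hg'⟩ := hg
  refine ⟨g' ≫ f', ?_⟩
  have h : (f ≫ g) ≫ g' ≫ f' = f ≫ (g ≫ g') ≫ f' := by simp only [Category.assoc]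
  rw [h, hg', Category.id_comp, hf']

variable {L : CLanguage C}

lemma isLHom_id (A : LStr L) : IsLHom A A (𝟙 A.X) :=
  ⟨fun R η => by simp, fun F γ => by simp⟩

lemma isLHom_comp {A B B' : LStr L} {f : A.X ⟶ B.X} {g : B.X ⟶ B'.X}
    (hf : IsLHom A B f) (hg : IsLHom B B' g) : IsLHom A B' (f ≫ g) := by
  constructor
  · intro R η
    rw [hf.1 R η, hg.1 R (η ≫ f), Category.assoc]
  · intro F γ
    rw [Category.assoc, hf.2 F (g ≫ γ), hg.2 F γ, Category.assoc]

section Diagram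

variable (A : Type v) (ι : Type)

/-- The shape of the amalgamation diagram for the partite lemma: one object for each
"word" in the Hales–Jewett cube, one object per combinatorial line. -/
abbrev JJ := (ι → A) ⊕ (Line A ι)

/-- The (thin) arrow relation of the diagram: each word embeds into each line through it. -/
def lrel : JJ A ι → JJ A ι → Prop
  | Sum.inl w, Sum.inl w' => w = w'
  | Sum.inl w, Sum.inr l => ∃ h : A, (l h : ι → A) = w
  | Sum.inr l, Sum.inr l' => l = l'
  | Sum.inr _, Sum.inl _ => False

lemma lrel_refl (x : JJ A ι) : lrel A ι x x := by
  cases x with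
  | inl w => exact rfl
  | inr l => exact rfl

lemma lrel_trans {x y z : JJ A ι} (h1 : lrel A ι x y) (h2 : lrel A ι y z) :
    lrel A ι x z := by
  cases x with
  | inl w =>
    cases y with
    | inl w' =>
      cases z with
      | inl w'' => exact (h1 : w = w').trans h2
      | inr l =>
        have e : w = w' := h1
        subst e
        exact h2
    | inr l =>
      cases z with
      | inl w' => exact (h2 : False).elim
      | inr l' =>
        have e : l = l' := h2
        subst e
        exact h1
  | inr l =>
    cases y with
    | inl w => exact (h1 : False).elim
    | inr l' =>
      cases z with
      | inl w => exact (h2 : False).elim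
      | inr l'' =>
        have e : l = l' := h1
        subst e
        exact h2

instance : Category.{v} (JJ A ι) where
  Hom x y := ULift.{v} (PLift (lrel A ι x y))
  id x := ⟨⟨lrel_refl A ι x⟩⟩
  comp f g := ⟨⟨lrel_trans A ι f.down.down g.down.down⟩⟩
  id_comp f := rfl
  comp_id f := rfl
  assoc f g h := rfl

instance (x y : JJ A ι) : Subsingleton (x ⟶ y) := ⟨fun ⟨⟨_⟩⟩ ⟨⟨_⟩⟩ => rfl⟩

lemma line_eval_inj (l : Line A ι) {a b : A} (hab : (l a : ι → A) = l b) : a = b := by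
  obtain ⟨i, hi⟩ := l.proper
  have h := congrFun hab i
  simpa [Line.coe_apply, hi] using h

variable (XX PP : C) (em : A → (XX ⟶ PP))

/-- The amalgamation diagram: words carry a copy of `XX`, lines a copy of `PP`. -/
noncomputable def FF : JJ A ι ⥤ C where
  obj x := match x with
    | Sum.inl _ => XX
    | Sum.inr _ => PP
  map {x y} p :=
    match x, y, p with
    | Sum.inl _, Sum.inl _, _ => 𝟙 XX
    | Sum.inl w, Sum.inr l, p =>
        em (Exists.choose (p.down.down : ∃ h : A, (l h : ι → A) = w))
    | Sum.inr _, Sum.inr _, _ => 𝟙 PP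
    | Sum.inr _, Sum.inl _, p => (p.down.down : False).elim
  map_id x := by cases x <;> rfl
  map_comp {x y z} p q := by
    cases x with
    | inl w =>
      cases y with
      | inl w' =>
        cases z with
        | inl w'' => exact (Category.id_comp (𝟙 XX)).symm
        | inr l =>
          have e : w = w' := p.down.down
          subst e
          have hpq : p ≫ q = q := Subsingleton.elim _ _
          rw [hpq]
          exact (Category.id_comp _).symm
      | inr l =>
        cases z with
        | inl w' => exact ((q.down.down : False)).elim
        | inr l' =>
          have e : l = l' := q.down.down
          subst e
          have hpq : p ≫ q = p := Subsingleton.elim _ _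
          rw [hpq]
          exact (Category.comp_id _).symm
    | inr l =>
      cases y with
      | inl w => exact ((p.down.down : False)).elim
      | inr l' =>
        cases z with
        | inl w => exact ((q.down.down : False)).elim
        | inr l'' => exact (Category.id_comp (𝟙 PP)).symm

/-- The arrow of the diagram from the word `l h` into the line `l`. -/
def arr (l : Line A ι) (h : A) : (Sum.inl ((l h : ι → A)) : JJ A ι) ⟶ Sum.inr l :=
  ⟨⟨⟨h, rfl⟩⟩⟩

lemma FF_map_arr (l : Line A ι) (h : A) :
    (FF A ι XX PP em).map (arr A ι l h) = em h := by
  show em _ = em h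
  congr 1
  exact line_eval_inj A ι l
    (Exists.choose_spec ((arr A ι l h).down.down : ∃ h' : A, (l h' : ι → A) = l h))

/-- Build a cocone on the amalgamation diagram from compatible components. -/
noncomputable def mkCocone (V : C) (tX : (ι → A) → (XX ⟶ V)) (tP : Line A ι → (PP ⟶ V))
    (hc : ∀ (l : Line A ι) (h : A), em h ≫ tP l = tX (l h)) :
    Cocone (FF A ι XX PP em) where
  pt := V
  ι :=
    { app := fun x => match x with
        | Sum.inl w => tX w
        | Sum.inr l => tP l
      naturality := by
        intro x y p
        cases x with
        | inl w =>
          cases y with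
          | inl w' =>
            have e : w = w' := p.down.down
            subst e
            rw [Subsingleton.elim p (𝟙 _)]
            simp
            exact (Category.id_comp _).trans (Category.comp_id _).symm
          | inr l =>
            obtain ⟨h0, hh0⟩ := (p.down.down : ∃ h : A, (l h : ι → A) = w)
            subst hh0
            rw [Subsingleton.elim p (arr A ι l h0), FF_map_arr]
            simp [hc]
            exact (hc l h0).trans (Category.comp_id _).symm
        | inr l =>
          cases y with
          | inl w => exact ((p.down.down : False)).elim
          | inr l' =>
            have e : l = l' := p.down.down
            subst e
            rw [Subsingleton.elim p (𝟙 _)]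
            simp
            exact (Category.id_comp _).trans (Category.comp_id _).symm }

end Diagram


section PartiteSingle

variable {C : Type u} [Category.{v} C]

/-- The abstract partite lemma: colorings of the embeddings of `XS` into `P` lying over a
fixed split trace `τ` can be made monochromatic inside a bigger structure `Q` over `W`. -/
lemma partite_single
    (hCfin : ∀ X Y : C, Finite (X ⟶ Y))
    (hcolim : ∀ (J : Type v) [Category.{v} J], Finite J → HasColimitsOfShape J C)
    {L : CLanguage C} (XS P : LStr L) {W : C} (πP : P.X ⟶ W) (τ : XS.X ⟶ W)
    (ϑ : W ⟶ XS.X) (hϑ : τ ≫ ϑ = 𝟙 XS.X) (r : ℕ) (hr : 0 < r) :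
    ∃ (Q : LStr L) (πQ : Q.X ⟶ W),
      ∀ χ : (XS.X ⟶ Q.X) → Fin r,
        ∃ u : P.X ⟶ Q.X, IsLHom P Q u ∧ HasLeftInv u ∧ u ≫ πQ = πP ∧
          ∃ c : Fin r, ∀ h : XS.X ⟶ P.X,
            IsLHom XS P h → HasLeftInv h → h ≫ πP = τ → χ (h ≫ u) = c := by
  classical
  haveI : Finite (XS.X ⟶ P.X) := hCfin _ _
  obtain ⟨ι, iF, hHJ⟩ :=
    Line.exists_mono_in_high_dimension
      {h : XS.X ⟶ P.X // IsLHom XS P h ∧ HasLeftInv h ∧ h ≫ πP = τ} (Fin r)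
  set A := {h : XS.X ⟶ P.X // IsLHom XS P h ∧ HasLeftInv h ∧ h ≫ πP = τ} with hA
  haveI := iF
  haveI : HasColimitsOfShape (JJ A ι) C := hcolim _ inferInstance
  let em : A → (XS.X ⟶ P.X) := fun h => h.1
  let Fd := FF A ι XS.X P.X em
  let ιw : (ι → A) → (XS.X ⟶ colimit Fd) := fun w => colimit.ι Fd (Sum.inl w)
  let ιl : Line A ι → (P.X ⟶ colimit Fd) := fun l => colimit.ι Fd (Sum.inr l)
  have hkey : ∀ (l : Line A ι) (h : A), em h ≫ ιl l = ιw (l h) := by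
    intro l h
    have h2 := colimit.w Fd (arr A ι l h)
    rw [FF_map_arr] at h2
    exact h2
  have hcfn : ∀ (Fs : L.Fn) (γ : colimit Fd ⟶ L.arF1 Fs) (l : Line A ι) (h : A),
      em h ≫ P.fn Fs (ιl l ≫ γ) = XS.fn Fs (ιw (l h) ≫ γ) := by
    intro Fs γ l h
    rw [← hkey l h, Category.assoc]
    exact (h.2.1.2 Fs (ιl l ≫ γ)).symm
  have hcπ : ∀ (l : Line A ι) (h : A), em h ≫ πP = τ := fun _ h => h.2.2.2
  -- retractions onto single lines
  have mkq : ∀ (d : ι), ∃ q : colimit Fd ⟶ P.X,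
      (∀ w : ι → A, ιw w ≫ q = em (w d)) ∧
      (∀ l : Line A ι, l.idxFun d = none → ιl l ≫ q = 𝟙 P.X) ∧
      (∀ (l : Line A ι) (a : A), l.idxFun d = some a → ιl l ≫ q = πP ≫ ϑ ≫ em a) := by
    intro d
    have hc : ∀ (l : Line A ι) (h : A),
        em h ≫ ((l.idxFun d).elim (𝟙 P.X) (fun a => πP ≫ ϑ ≫ em a)) = em ((l h) d) := by
      intro l h
      rcases hld : l.idxFun d with _ | a
      · simp only [hld, Option.elim, Category.comp_id]
        simp [Line.coe_apply, hld]
      · simp only [hld, Option.elim]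
        have h1 : em h ≫ πP ≫ ϑ ≫ em a = ((em h ≫ πP) ≫ ϑ) ≫ em a := by
          simp only [Category.assoc]
        rw [h1, h.2.2.2, hϑ, Category.id_comp]
        simp [Line.coe_apply, hld]
    refine ⟨colimit.desc Fd (mkCocone A ι XS.X P.X em P.X (fun w => em (w d))
      (fun l => (l.idxFun d).elim (𝟙 P.X) (fun a => πP ≫ ϑ ≫ em a)) hc), ?_, ?_, ?_⟩
    · intro w
      exact colimit.ι_desc _ (Sum.inl w)
    · intro l hld
      have h2 := colimit.ι_desc (mkCocone A ι XS.X P.X em P.X (fun w => em (w d))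
        (fun l => (l.idxFun d).elim (𝟙 P.X) (fun a => πP ≫ ϑ ≫ em a)) hc) (Sum.inr l)
      rw [show ((mkCocone A ι XS.X P.X em P.X (fun w => em (w d))
        (fun l => (l.idxFun d).elim (𝟙 P.X) (fun a => πP ≫ ϑ ≫ em a)) hc)).ι.app (Sum.inr l)
          = (l.idxFun d).elim (𝟙 P.X) (fun a => πP ≫ ϑ ≫ em a) from rfl, hld] at h2
      exact h2
    · intro l a hld
      have h2 := colimit.ι_desc (mkCocone A ι XS.X P.X em P.X (fun w => em (w d))
        (fun l => (l.idxFun d).elim (𝟙 P.X) (fun a => πP ≫ ϑ ≫ em a)) hc) (Sum.inr l)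
      rw [show ((mkCocone A ι XS.X P.X em P.X (fun w => em (w d))
        (fun l => (l.idxFun d).elim (𝟙 P.X) (fun a => πP ≫ ϑ ≫ em a)) hc)).ι.app (Sum.inr l)
          = (l.idxFun d).elim (𝟙 P.X) (fun a => πP ≫ ϑ ≫ em a) from rfl, hld] at h2
      exact h2
  -- the L-structure on the colimit
  refine ⟨⟨colimit Fd,
      fun R => {θ | ∃ (l : Line A ι) (η : L.arR R ⟶ P.X), η ∈ P.rel R ∧ θ = η ≫ ιl l},
      fun Fs γ => colimit.desc Fd (mkCocone A ι XS.X P.X em (L.arF2 Fs)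
        (fun w => XS.fn Fs (ιw w ≫ γ)) (fun l => P.fn Fs (ιl l ≫ γ)) (hcfn Fs γ))⟩,
    colimit.desc Fd (mkCocone A ι XS.X P.X em W (fun _ => τ) (fun _ => πP) hcπ), ?_⟩
  intro χ
  obtain ⟨lstar, cstar, hmono⟩ := hHJ (fun w => χ (ιw w))
  obtain ⟨d0, hd0⟩ := lstar.proper
  obtain ⟨q0, hq0w, hq0none, hq0some⟩ := mkq d0
  refine ⟨ιl lstar, ⟨?_, ?_⟩, ⟨q0, hq0none lstar hd0⟩, colimit.ι_desc _ (Sum.inr lstar),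
    cstar, ?_⟩
  · -- relations
    intro R η
    constructor
    · intro hη
      exact ⟨lstar, η, hη, rfl⟩
    · rintro ⟨l, η', hη', heq⟩
      by_cases hcap : ∃ d, lstar.idxFun d = none ∧ l.idxFun d = none
      · obtain ⟨d, h1, h2⟩ := hcap
        obtain ⟨q, hqw, hqnone, hqsome⟩ := mkq d
        have e1 := congrArg (fun t => t ≫ q) heq
        simp only [Category.assoc] at e1
        rw [hqnone lstar h1, hqnone l h2, Category.comp_id, Category.comp_id] at e1
        rwa [e1]
      · push_neg at hcap
        obtain ⟨d', hd'⟩ := l.proper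
        have hst : lstar.idxFun d' ≠ none := fun hcon => (hcap d' hcon) hd'
        obtain ⟨b, hb⟩ := Option.ne_none_iff_exists'.mp hst
        have hl0 : l.idxFun d0 ≠ none := hcap d0 hd0
        obtain ⟨a, ha⟩ := Option.ne_none_iff_exists'.mp hl0
        obtain ⟨q1, hq1w, hq1none, hq1some⟩ := mkq d0
        obtain ⟨q2, hq2w, hq2none, hq2some⟩ := mkq d'
        have e1 : η = η' ≫ πP ≫ ϑ ≫ em a := by
          have e := congrArg (fun t => t ≫ q1) heq
          simp only [Category.assoc] at e
          rw [hq1none lstar hd0, hq1some l a ha, Category.comp_id] at e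
          exact e
        have e2 : η' = η ≫ πP ≫ ϑ ≫ em b := by
          have e := congrArg (fun t => t ≫ q2) heq
          simp only [Category.assoc] at e
          rw [hq2none l hd', hq2some lstar b hb, Category.comp_id] at e
          exact e.symm
        set ζ := η' ≫ πP ≫ ϑ with hζ
        have hζa : η = ζ ≫ em a := by
          rw [e1, hζ]
          simp only [Category.assoc]
        have hζτ : η ≫ πP ≫ ϑ = ζ := by
          have h1 : em a ≫ πP = τ := a.2.2.2
          calc η ≫ πP ≫ ϑ = (ζ ≫ em a) ≫ πP ≫ ϑ := by rw [← hζa]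
          _ = ζ ≫ (em a ≫ πP) ≫ ϑ := by simp only [Category.assoc]
          _ = ζ := by rw [h1, hϑ, Category.comp_id]
        have hζb : η' = ζ ≫ em b := by
          have h1 : η ≫ πP ≫ ϑ ≫ em b = (η ≫ πP ≫ ϑ) ≫ em b := by
            simp only [Category.assoc]
          rw [e2, h1, hζτ]
        have hζX : ζ ∈ XS.rel R := by
          apply (b.2.1.1 R ζ).mpr
          rw [← hζb]
          exact hη'
        have hfin := (a.2.1.1 R ζ).mp hζX
        rwa [← hζa] at hfin
  · -- function symbols
    intro Fs γ
    exact (colimit.ι_desc (mkCocone A ι XS.X P.X em (L.arF2 Fs)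
      (fun w => XS.fn Fs (ιw w ≫ γ)) (fun l => P.fn Fs (ιl l ≫ γ)) (hcfn Fs γ))
      (Sum.inr lstar)).symm
  · -- monochromaticity
    intro h hL hInv hover
    exact (congrArg χ (hkey lstar ⟨h, hL, hInv, hover⟩)).trans (hmono ⟨h, hL, hInv, hover⟩)

end PartiteSingle

/-- Iterating the partite lemma over a list of traces. -/
lemma partite_iter {C : Type u} [Category.{v} C]
    (hCfin : ∀ X Y : C, Finite (X ⟶ Y))
    (hcolim : ∀ (J : Type v) [Category.{v} J], Finite J → HasColimitsOfShape J C)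
    {L : CLanguage C} (XS : LStr L) {W : C} (r : ℕ) (hr : 0 < r)
    (lst : List (XS.X ⟶ W)) (hinv : ∀ τ ∈ lst, HasLeftInv τ)
    (P : LStr L) (πP : P.X ⟶ W) :
    ∃ (Q : LStr L) (πQ : Q.X ⟶ W),
      ∀ χ : (XS.X ⟶ Q.X) → Fin r,
        ∃ u : P.X ⟶ Q.X, IsLHom P Q u ∧ HasLeftInv u ∧ u ≫ πQ = πP ∧
          ∃ col : (XS.X ⟶ W) → Fin r,
            ∀ h : XS.X ⟶ P.X, IsLHom XS P h → HasLeftInv h → (h ≫ πP) ∈ lst →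
              χ (h ≫ u) = col (h ≫ πP) := by
  classical
  induction lst generalizing P πP with
  | nil =>
    exact ⟨P, πP, fun χ => ⟨𝟙 P.X, isLHom_id P, hasLeftInv_id, Category.id_comp πP,
      fun _ => ⟨0, hr⟩, fun h _ _ hmem => absurd hmem List.not_mem_nil⟩⟩
  | cons τ lst' IH =>
    obtain ⟨Q₁, π₁, hQ₁⟩ := IH (fun τ' hτ' => hinv τ' (List.mem_cons_of_mem _ hτ')) P πP
    obtain ⟨ϑ, hϑ⟩ := hinv τ List.mem_cons_self
    obtain ⟨Q, πQ, hQ⟩ := partite_single hCfin hcolim XS Q₁ π₁ τ ϑ hϑ r hr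
    refine ⟨Q, πQ, ?_⟩
    intro χ
    obtain ⟨u₂, hu₂L, hu₂inv, hu₂π, c, hc⟩ := hQ χ
    obtain ⟨u₁, hu₁L, hu₁inv, hu₁π, col₁, hcol₁⟩ := hQ₁ (fun t => χ (t ≫ u₂))
    refine ⟨u₁ ≫ u₂, isLHom_comp hu₁L hu₂L, hasLeftInv_comp hu₁inv hu₂inv,
      by rw [Category.assoc, hu₂π, hu₁π], fun t => if t = τ then c else col₁ t, ?_⟩
    intro h hL hInv hmem
    show χ (h ≫ (u₁ ≫ u₂)) = if h ≫ πP = τ then c else col₁ (h ≫ πP)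
    by_cases hcase : h ≫ πP = τ
    · rw [if_pos hcase]
      have hres := hc (h ≫ u₁) (isLHom_comp hL hu₁L) (hasLeftInv_comp hInv hu₁inv)
        (by rw [Category.assoc, hu₁π, hcase])
      rw [← Category.assoc]
      exact hres
    · rw [if_neg hcase]
      have hmem' : h ≫ πP ∈ lst' := by
        rcases List.mem_cons.mp hmem with h1 | h1
        · exact absurd h1 hcase
        · exact h1
      have hres := hcol₁ h hL hInv hmem'
      rw [← Category.assoc]
      exact hres

end PartiteAux

open PartiteAux CategoryTheory.Limits in
/-- **Partite Construction**: let `G : 𝒟 ⥤ 𝒞` be a functor such that (1) `𝒞` and `𝒟`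
have finite hom-sets, (2) `G(f)` has a left inverse in `𝒞` for every morphism `f` of
`𝒟`, (3) `𝒞` has colimits over all diagrams whose index category has a finite set of
objects, and (4) `𝒟` has the Ramsey property. Then for any `𝒞`-language `ℒ`, any
`r > 0`, any monic `𝒟`-block `𝚇` and any `𝒟`-block `𝚈` there is a `𝒟`-block `𝚉` with
`𝚉 → (𝚈)^𝚇_r` in `Bl^m_𝒟`. -/
theorem partite_construction
    {C : Type u} [Category.{v} C] {D : Type u'} [Category.{v'} D] (G : D ⥤ C)
    (hCfin : ∀ X Y : C, Finite (X ⟶ Y))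
    (hDfin : ∀ K L : D, Finite (K ⟶ L))
    (hG : ∀ {K L : D} (f : K ⟶ L), HasLeftInv (G.map f))
    (hcolim : ∀ (J : Type v) [Category.{v} J], Finite J → Limits.HasColimitsOfShape J C)
    (hRamseyD : ∀ (A B : D) (r : ℕ), 0 < r → ∃ Z : D,
      ∀ χ : (A ⟶ Z) → Fin r, ∃ g : B ⟶ Z, ∃ c : Fin r, ∀ f : A ⟶ B, χ (f ≫ g) = c)
    (L : CLanguage C) (r : ℕ) (hr : 0 < r)
    (X Y : DBlock L G) (hX : HasLeftInv X.π) :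
    ∃ Z : DBlock L G,
      ∀ χ : (X.S.X ⟶ Z.S.X) → Fin r,
        ∃ g : Y.S.X ⟶ Z.S.X, DBlockHom Y Z g ∧
          ∃ c : Fin r, ∀ f : X.S.X ⟶ Y.S.X, DBlockHom X Y f → χ (f ≫ g) = c := by
  classical
  obtain ⟨σX, hσX⟩ := hX
  obtain ⟨K₀, hK₀⟩ := hRamseyD X.K Y.K r hr
  haveI : Finite (Y.K ⟶ K₀) := hDfin _ _
  haveI : Finite (X.K ⟶ K₀) := hDfin _ _
  obtain ⟨m, ⟨eqm⟩⟩ := Finite.exists_equiv_fin (Y.K ⟶ K₀)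
  -- the coproduct of copies of `Y` indexed by `Hom(Y.K, K₀)`
  haveI : Finite (Discrete (ULift.{v} (Fin m))) :=
    Finite.of_surjective (fun k : ULift.{v} (Fin m) => (⟨k⟩ : Discrete (ULift.{v} (Fin m))))
      (fun x => ⟨x.as, rfl⟩)
  haveI : HasColimitsOfShape (Discrete (ULift.{v} (Fin m))) C := hcolim _ inferInstance
  let F₀ : Discrete (ULift.{v} (Fin m)) ⥤ C := Discrete.functor (fun _ => Y.S.X)
  let ι₀ : Fin m → (Y.S.X ⟶ colimit F₀) := fun k => colimit.ι F₀ ⟨ULift.up k⟩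
  let q₀ : colimit F₀ ⟶ Y.S.X :=
    colimit.desc F₀ ⟨Y.S.X, Discrete.natTrans (fun _ => 𝟙 Y.S.X)⟩
  let π₀ : colimit F₀ ⟶ G.obj K₀ :=
    colimit.desc F₀ ⟨G.obj K₀, Discrete.natTrans (fun i => Y.π ≫ G.map (eqm.symm i.as.down))⟩
  let P₀S : LStr L :=
    ⟨colimit F₀,
      fun R => {θ | ∃ (k : Fin m) (η : L.arR R ⟶ Y.S.X), η ∈ Y.S.rel R ∧ θ = η ≫ ι₀ k},
      fun Fs γ => colimit.desc F₀
        ⟨L.arF2 Fs, Discrete.natTrans (fun i => Y.S.fn Fs (colimit.ι F₀ i ≫ γ))⟩⟩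
  have hι₀q : ∀ k : Fin m, ι₀ k ≫ q₀ = 𝟙 Y.S.X := fun k => colimit.ι_desc _ _
  have hι₀π : ∀ k : Fin m, ι₀ k ≫ π₀ = Y.π ≫ G.map (eqm.symm k) := fun k =>
    colimit.ι_desc _ _
  have hι₀fn : ∀ (Fs : L.Fn) (γ : P₀S.X ⟶ L.arF1 Fs) (k : Fin m),
      ι₀ k ≫ P₀S.fn Fs γ = Y.S.fn Fs (ι₀ k ≫ γ) := fun Fs γ k => colimit.ι_desc _ _
  have hgEmb : ∀ (j : Y.K ⟶ K₀), IsLHom Y.S P₀S (ι₀ (eqm j)) ∧ HasLeftInv (ι₀ (eqm j)) ∧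
      ι₀ (eqm j) ≫ π₀ = Y.π ≫ G.map j := by
    intro j
    refine ⟨⟨?_, ?_⟩, ⟨q₀, hι₀q _⟩, by rw [hι₀π, Equiv.symm_apply_apply]⟩
    · intro R η
      constructor
      · intro hη
        exact ⟨eqm j, η, hη, rfl⟩
      · rintro ⟨k, η', hη', heq⟩
        have e := congrArg (fun t => t ≫ q₀) heq
        simp only [Category.assoc] at e
        rw [hι₀q, hι₀q, Category.comp_id, Category.comp_id] at e
        rwa [e]
    · intro Fs γ
      exact (hι₀fn Fs γ (eqm j)).symm
  -- the list of all traces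
  haveI : Fintype (X.K ⟶ K₀) := Fintype.ofFinite _
  let lst : List (X.S.X ⟶ G.obj K₀) :=
    (Finset.univ : Finset (X.K ⟶ K₀)).toList.map (fun i => X.π ≫ G.map i)
  have hlst_inv : ∀ τ ∈ lst, HasLeftInv τ := by
    intro τ hτ
    obtain ⟨i, _, rfl⟩ := List.mem_map.mp hτ
    obtain ⟨ℓ, hℓ⟩ := hG i
    refine ⟨ℓ ≫ σX, ?_⟩
    have h1 : (X.π ≫ G.map i) ≫ ℓ ≫ σX = X.π ≫ (G.map i ≫ ℓ) ≫ σX := by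
      simp only [Category.assoc]
    rw [h1, hℓ, Category.id_comp, hσX]
  have hmem_lst : ∀ i : X.K ⟶ K₀, (X.π ≫ G.map i) ∈ lst := fun i =>
    List.mem_map_of_mem (Finset.mem_toList.mpr (Finset.mem_univ i))
  -- iterate the partite lemma over all traces
  obtain ⟨Q, πQ, hQ⟩ := partite_iter hCfin hcolim X.S r hr lst hlst_inv P₀S π₀
  refine ⟨⟨Q, K₀, πQ⟩, ?_⟩
  intro χ
  obtain ⟨u, huL, huInv, huπ, col, hcol⟩ := hQ χ
  obtain ⟨jstar, c, hjc⟩ := hK₀ (fun i => col (X.π ≫ G.map i))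
  obtain ⟨hgL, hgInv, hgπ⟩ := hgEmb jstar
  refine ⟨ι₀ (eqm jstar) ≫ u,
    ⟨isLHom_comp hgL huL, hasLeftInv_comp hgInv huInv, jstar,
      by rw [Category.assoc, huπ, hgπ]⟩, c, ?_⟩
  intro f hf
  obtain ⟨hfL, hfInv, i, hfπ⟩ := hf
  have htrace : (f ≫ ι₀ (eqm jstar)) ≫ π₀ = X.π ≫ G.map (i ≫ jstar) := by
    rw [Category.assoc, hgπ, ← Category.assoc, hfπ, Category.assoc, ← G.map_comp]
  have happ := hcol (f ≫ ι₀ (eqm jstar)) (isLHom_comp hfL hgL)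
    (hasLeftInv_comp hfInv hgInv) (by rw [htrace]; exact hmem_lst (i ≫ jstar))
  rw [htrace] at happ
  have hfinal := hjc i
  rw [← Category.assoc]
  rw [happ]
  exact hfinal
end

section
/- Let G : (Fin, ≤) → Fin be the forgetful functor defined by G(K, ≤) = K and G(f) = f, where (Fin, ≤) is the category of finite linear orders with increasing injections and Fin is the category of finite sets. For any Fin-language ℒ, the category (ℒ, (Fin, ≤)) has the Ramsey property: for all objects 𝖪, 𝖬 of (ℒ, (Fin, ≤)) and all integers r > 0, there exists an object 𝖹 of (ℒ, (Fin, ≤)) such that 𝖹 → (𝖬)^𝖪_r. -/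
/-- A `Fin`-language: a set of relation symbols with arities finite sets, and a set
of function symbols with arities pairs of finite sets. -/
structure FinLanguage where
  Rel : Type
  Fn : Type
  arR : Rel → Type
  arR_fin : ∀ R, Finite (arR R)
  arF1 : Fn → Type
  arF1_fin : ∀ F, Finite (arF1 F)
  arF2 : Fn → Type
  arF2_fin : ∀ F, Finite (arF2 F)

/-- An object of the category `(ℒ, (Fin, ≤))`: a finite linearly ordered `ℒ`-structure,
with the standard interpretation of relation symbols (`R^𝖷 ⊆ X^r`) and the dual
interpretation of function symbols (`F^𝖷 : r^X → s^X`). -/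
structure OrdStr (L : FinLanguage) where
  X : Type
  fin : Finite X
  ord : LinearOrder X
  rel : ∀ R : L.Rel, Set (L.arR R → X)
  fn : ∀ F : L.Fn, (X → L.arF1 F) → (X → L.arF2 F)

/-- A morphism of `(ℒ, (Fin, ≤))`: an increasing injection (strictly monotone map)
that is an `ℒ`-homomorphism. -/
def IsOrdHom {L : FinLanguage} (A B : OrdStr L) (f : A.X → B.X) : Prop :=
  (∀ a b : A.X, A.ord.lt a b → B.ord.lt (f a) (f b)) ∧
  (∀ (R : L.Rel) (η : L.arR R → A.X), η ∈ A.rel R ↔ (f ∘ η) ∈ B.rel R) ∧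
  (∀ (F : L.Fn) (γ : B.X → L.arF1 F), A.fn F (γ ∘ f) = (B.fn F γ) ∘ f)

namespace Solecki

noncomputable def arbLO (X : Type*) [Finite X] : LinearOrder X :=
  haveI := Fintype.ofFinite X
  LinearOrder.lift' (Fintype.equivFin X) (Fintype.equivFin X).injective

theorem isOrdHom_id {L : FinLanguage} (A : OrdStr L) : IsOrdHom A A id := by
  refine ⟨fun a b h => h, fun R η => by simp [Function.id_comp], fun F γ => by
    simp [Function.comp_id]⟩

theorem isOrdHom_comp {L : FinLanguage} {A B C : OrdStr L} {f : A.X → B.X} {g : B.X → C.X}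
    (hf : IsOrdHom A B f) (hg : IsOrdHom B C g) : IsOrdHom A C (g ∘ f) := by
  obtain ⟨hf1, hf2, hf3⟩ := hf
  obtain ⟨hg1, hg2, hg3⟩ := hg
  refine ⟨fun a b h => hg1 _ _ (hf1 _ _ h), fun R η => ?_, fun F γ => ?_⟩
  · rw [hf2, hg2, Function.comp_assoc]
  · calc A.fn F (γ ∘ (g ∘ f)) = A.fn F ((γ ∘ g) ∘ f) := by rw [Function.comp_assoc]
      _ = (B.fn F (γ ∘ g)) ∘ f := hf3 F (γ ∘ g)
      _ = ((C.fn F γ) ∘ g) ∘ f := by rw [hg3]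
      _ = (C.fn F γ) ∘ (g ∘ f) := by rw [Function.comp_assoc]

/-- Pre-homogeneous Ramsey lemma: colors of `(k+1)`-tuples depend only on the first element. -/
theorem preRamsey (k r : ℕ)
    (IH : ∀ m : ℕ, ∃ N : ℕ, ∀ Ξ : (Fin k → Fin N) → Fin r,
      ∃ σ : Fin m → Fin N, StrictMono σ ∧ ∃ c, ∀ f : Fin k → Fin m, StrictMono f → Ξ (σ ∘ f) = c) :
    ∀ n : ℕ, ∃ N : ℕ, ∀ Ξ : (Fin (k+1) → Fin N) → Fin r,
      ∃ g : Fin n → Fin N, StrictMono g ∧ ∃ κ : Fin n → Fin r,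
        ∀ f : Fin (k+1) → Fin n, StrictMono f → Ξ (g ∘ f) = κ (f 0) := by
  intro n
  induction n with
  | zero =>
      refine ⟨1, fun Ξ => ⟨Fin.elim0, fun a => a.elim0, Fin.elim0, fun f hf => (f 0).elim0⟩⟩
  | succ n ihn =>
      obtain ⟨N₂, hN₂⟩ := ihn
      obtain ⟨N₁, hN₁⟩ := IH N₂
      refine ⟨N₁ + 1, fun Ξ => ?_⟩
      -- pivot coloring
      set Ξ₁ : (Fin k → Fin N₁) → Fin r :=
        fun u => Ξ (Fin.cases 0 (fun i => (u i).succ)) with hΞ₁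
      obtain ⟨σ₁, hσ₁, c₀, hc₀⟩ := hN₁ Ξ₁
      set Ξ₂ : (Fin (k+1) → Fin N₂) → Fin r := fun u => Ξ (fun i => (σ₁ (u i)).succ) with hΞ₂
      obtain ⟨g₂, hg₂, κ₂, hκ₂⟩ := hN₂ Ξ₂
      refine ⟨Fin.cases 0 (fun j => (σ₁ (g₂ j)).succ), ?_, Fin.cases c₀ κ₂, ?_⟩
      · intro a b hab
        induction a using Fin.cases with
        | zero =>
            induction b using Fin.cases with
            | zero => exact absurd hab (lt_irrefl _)
            | succ j => simpa using Fin.succ_pos _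
        | succ i =>
            induction b using Fin.cases with
            | zero => exact absurd hab (by simp [Fin.lt_iff_val_lt_val])
            | succ j =>
                have hij : i < j := by simpa [Fin.succ_lt_succ_iff] using hab
                simpa [Fin.succ_lt_succ_iff] using hσ₁ (hg₂ hij)
      · intro f hf
        by_cases h0 : f 0 = 0
        · -- first value is the pivot
          have hne : ∀ i : Fin k, f i.succ ≠ 0 := by
            intro i
            have : f 0 < f i.succ := hf (Fin.succ_pos i)
            rw [h0] at this
            exact Fin.pos_iff_ne_zero.mp this
          set f' : Fin k → Fin n := fun i => (f i.succ).pred (hne i) with hf'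
          have hf'mono : StrictMono f' := by
            intro a b hab
            have := hf (Fin.succ_lt_succ_iff.mpr hab)
            simpa [hf', Fin.pred_lt_pred_iff] using this
          have key : Ξ (Fin.cases 0 (fun j => (σ₁ (g₂ j)).succ) ∘ f)
              = Ξ₁ (σ₁ ∘ (g₂ ∘ f')) := by
            rw [hΞ₁]
            congr 1
            funext i
            induction i using Fin.cases with
            | zero => simp [Function.comp, h0]
            | succ i =>
                have : f i.succ = (f' i).succ := (Fin.succ_pred _ (hne i)).symm
                simp only [Function.comp_apply, this, Fin.cases_succ]
          rw [key, hc₀ (g₂ ∘ f') (hg₂.comp hf'mono), h0]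
          simp
        · -- all values avoid the pivot
          have hne : ∀ i : Fin (k+1), f i ≠ 0 := by
            intro i
            have h0le : f 0 ≤ f i := hf.monotone (Fin.zero_le i)
            intro hfi
            exact h0 (le_antisymm (hfi ▸ h0le) (Fin.zero_le _))
          set f'' : Fin (k+1) → Fin n := fun i => (f i).pred (hne i) with hf''
          have hf''mono : StrictMono f'' := by
            intro a b hab
            simpa [hf'', Fin.pred_lt_pred_iff] using hf hab
          have key : Ξ (Fin.cases 0 (fun j => (σ₁ (g₂ j)).succ) ∘ f) = Ξ₂ (g₂ ∘ f'') := by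
            rw [hΞ₂]
            congr 1
            funext i
            have : f i = (f'' i).succ := (Fin.succ_pred _ (hne i)).symm
            simp only [Function.comp_apply, this, Fin.cases_succ]
          rw [key, hκ₂ f'' hf''mono]
          have : f 0 = (f'' 0).succ := (Fin.succ_pred _ (hne 0)).symm
          rw [this]
          simp

/-- Finite Ramsey theorem, in the form of strictly monotone maps between `Fin` types. -/
theorem finRamsey (k : ℕ) : ∀ r n : ℕ, 0 < r → ∃ N : ℕ, ∀ Ξ : (Fin k → Fin N) → Fin r,
    ∃ σ : Fin n → Fin N, StrictMono σ ∧ ∃ c, ∀ f : Fin k → Fin n, StrictMono f → Ξ (σ ∘ f) = c := by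
  induction k with
  | zero =>
      intro r n _
      refine ⟨n, fun Ξ => ⟨id, strictMono_id, Ξ (id ∘ Fin.elim0), fun f hf => ?_⟩⟩
      have : f = Fin.elim0 := funext fun i => i.elim0
      rw [this]
  | succ k IH =>
      intro r n hr
      obtain ⟨N, hN⟩ := preRamsey k r (fun m => IH r m hr) (r * n)
      refine ⟨N, fun Ξ => ?_⟩
      obtain ⟨g, hg, κ, hκ⟩ := hN Ξ
      -- pigeonhole: some color appears at least n times
      have hcard : (Finset.univ : Finset (Fin r)).card * n ≤ (Finset.univ : Finset (Fin (r*n))).card := by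
        simp
      obtain ⟨c, -, hc⟩ := Finset.exists_le_card_fiber_of_mul_le_card_of_maps_to
        (f := κ) (fun a _ => Finset.mem_univ _) ⟨⟨0, hr⟩, Finset.mem_univ _⟩ hcard
      obtain ⟨t, hts, htcard⟩ := Finset.exists_subset_card_eq hc
      set σ₀ := t.orderEmbOfFin htcard with hσ₀
      refine ⟨g ∘ σ₀, hg.comp σ₀.strictMono, c, fun f hf => ?_⟩
      have : (g ∘ σ₀) ∘ f = g ∘ (σ₀ ∘ f) := rfl
      rw [this, hκ (σ₀ ∘ f) (σ₀.strictMono.comp hf)]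
      have hmem : σ₀ (f 0) ∈ t := Finset.orderEmbOfFin_mem t htcard (f 0)
      have := hts hmem
      simp only [Finset.mem_filter] at this
      exact this.2

/-- Ramsey theorem for abstract finite linear orders. -/
theorem ordRamsey (Kt Mt : Type) [LinearOrder Kt] [LinearOrder Mt] [Finite Kt] [Finite Mt]
    (r : ℕ) (hr : 0 < r) :
    ∃ N : ℕ, ∀ Ξ : (Kt → Fin N) → Fin r,
      ∃ σ : Mt → Fin N, StrictMono σ ∧ ∃ c, ∀ f : Kt → Mt, StrictMono f → Ξ (σ ∘ f) = c := by
  haveI := Fintype.ofFinite Kt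
  haveI := Fintype.ofFinite Mt
  obtain ⟨N, hN⟩ := finRamsey (Fintype.card Kt) r (Fintype.card Mt) hr
  refine ⟨N, fun Ξ => ?_⟩
  set eK := Fintype.orderIsoFinOfCardEq Kt rfl
  set eM := Fintype.orderIsoFinOfCardEq Mt rfl
  obtain ⟨σ', hσ', c, hc⟩ := hN (fun u => Ξ (u ∘ eK.symm))
  refine ⟨σ' ∘ eM.symm, hσ'.comp eM.symm.strictMono, c, fun f hf => ?_⟩
  have := hc (eM.symm ∘ f ∘ eK) (eM.symm.strictMono.comp (hf.comp eK.strictMono))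
  have harg : (σ' ∘ (eM.symm ∘ f ∘ eK)) ∘ eK.symm = (σ' ∘ eM.symm) ∘ f := by
    funext x
    simp [Function.comp]
  rwa [harg] at this



open scoped Classical

attribute [instance] OrdStr.fin OrdStr.ord



instance lineFinite {α ι : Type*} [Finite α] [Finite ι] : Finite (Combinatorics.Line α ι) := by
  haveI := Fintype.ofFinite α
  haveI := Fintype.ofFinite ι
  exact Finite.of_injective (fun l => l.idxFun) (by
    intro a b h; cases a; cases b; simpa using h)

noncomputable instance lineLO {α ι : Type*} [Finite α] [Finite ι] :
    LinearOrder (Combinatorics.Line α ι) := arbLO _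

open Combinatorics

section Stage

variable {L : FinLanguage} (K 𝒱 : OrdStr L) {N : ℕ}
  (π : 𝒱.X → Fin N) (τ : K.X → Fin N)

/-- The alphabet: copies of `K` in `𝒱` lying over the pattern `τ`. -/
def Lam : Type := {α : K.X → 𝒱.X // IsOrdHom K 𝒱 α ∧ ∀ x, π (α x) = τ x}

instance : Finite (Lam K 𝒱 π τ) := by
  unfold Lam; infer_instance

variable [Nonempty K.X]

/-- The position of a point of `𝒱` lying over the pattern `τ`. -/
noncomputable def posOf (v : 𝒱.X) : K.X :=
  if h : ∃ x, τ x = π v then h.choose else Classical.arbitrary K.X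

lemma posOf_eq (hτ : StrictMono τ) {v : 𝒱.X} {x : K.X} (hx : τ x = π v) :
    posOf K 𝒱 π τ v = x := by
  rw [posOf, dif_pos ⟨x, hx⟩]
  exact hτ.injective ((Exists.choose_spec (⟨x, hx⟩ : ∃ x, τ x = π v)).trans hx.symm)

lemma posOf_lam (hτ : StrictMono τ) (a : Lam K 𝒱 π τ) (x : K.X) :
    posOf K 𝒱 π τ (a.1 x) = x :=
  posOf_eq K 𝒱 π τ hτ (a.2.2 x).symm

variable (ι : Type) [Fintype ι]

/-- The point of the power structure determined by a line and a point of `𝒱`. -/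
noncomputable def eVec (ℓ : Line (Lam K 𝒱 π τ) ι) (v : 𝒱.X) : ι → 𝒱.X :=
  fun n => (ℓ.idxFun n).elim v (fun a => a.1 (posOf K 𝒱 π τ v))

/-- The set of points of `𝒱` lying on some copy over `τ`. -/
def Cset : Set 𝒱.X := {v | ∃ a : Lam K 𝒱 π τ, ∃ x, a.1 x = v}

/-- Underlying type of the stage structure. -/
abbrev VT : Type := (ι → 𝒱.X) ⊕ (Line (Lam K 𝒱 π τ) ι × 𝒱.X)

instance : Finite (VT K 𝒱 π τ ι) := by
  unfold VT; infer_instance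

/-- The embeddings of `𝒱` into the stage structure, one for each line. -/
noncomputable def Phi (ℓ : Line (Lam K 𝒱 π τ) ι) (v : 𝒱.X) : VT K 𝒱 π τ ι :=
  if v ∈ Cset K 𝒱 π τ then Sum.inl (eVec K 𝒱 π τ ι ℓ v) else Sum.inr (ℓ, v)

/-- The copies of `K` in the stage structure determined by words. -/
def kw (w : ι → Lam K 𝒱 π τ) : K.X → VT K 𝒱 π τ ι :=
  fun x => Sum.inl (fun n => (w n).1 x)

variable (i₀ : ι) (ℓ₀ : Line (Lam K 𝒱 π τ) ι)

/-- Key used to linearly order the stage structure. -/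
noncomputable def keyMap :
    VT K 𝒱 π τ ι → Fin N ×ₗ (Lex (ι → 𝒱.X) ×ₗ (Fin 2 ×ₗ Line (Lam K 𝒱 π τ) ι))
  | Sum.inl h => toLex (π (h i₀), toLex (toLex h, toLex (0, ℓ₀)))
  | Sum.inr p => toLex (π p.2, toLex (toLex (eVec K 𝒱 π τ ι p.1 p.2), toLex (1, p.1)))

lemma keyMap_inj : Function.Injective (keyMap K 𝒱 π τ ι i₀ ℓ₀) := by
  intro z z' h
  match z, z' with
  | Sum.inl a, Sum.inl b =>
      simp only [keyMap, toLex_inj, Prod.mk.injEq] at h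
      rw [h.2.1]
  | Sum.inl a, Sum.inr p =>
      exfalso
      simp only [keyMap, toLex_inj, Prod.mk.injEq] at h
      exact absurd h.2.2.1 (by decide)
  | Sum.inr p, Sum.inl a =>
      exfalso
      simp only [keyMap, toLex_inj, Prod.mk.injEq] at h
      exact absurd h.2.2.1 (by decide)
  | Sum.inr p, Sum.inr q =>
      simp only [keyMap, toLex_inj, Prod.mk.injEq] at h
      obtain ⟨h1, h2, h3, h4⟩ := h
      obtain ⟨n, hn⟩ := p.1.proper
      have h5 := congrFun h2 n
      have hn' : q.1.idxFun n = none := h4 ▸ hn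
      simp only [eVec, hn, hn', Option.elim] at h5
      exact congrArg Sum.inr (Prod.ext_iff.mpr ⟨h4, h5⟩)


variable [LinearOrder ι]

/-- The linear order on the stage structure. -/
noncomputable def stageOrd : LinearOrder (VT K 𝒱 π τ ι) :=
  LinearOrder.lift' (keyMap K 𝒱 π τ ι i₀ ℓ₀) (keyMap_inj K 𝒱 π τ ι i₀ ℓ₀)

lemma stageOrd_lt_iff (z z' : VT K 𝒱 π τ ι) :
    (stageOrd K 𝒱 π τ ι i₀ ℓ₀).lt z z' ↔
      keyMap K 𝒱 π τ ι i₀ ℓ₀ z < keyMap K 𝒱 π τ ι i₀ ℓ₀ z' := Iff.rfl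

lemma stageOrd_le_iff (z z' : VT K 𝒱 π τ ι) :
    (stageOrd K 𝒱 π τ ι i₀ ℓ₀).le z z' ↔
      keyMap K 𝒱 π τ ι i₀ ℓ₀ z ≤ keyMap K 𝒱 π τ ι i₀ ℓ₀ z' := Iff.rfl

lemma posOf_congr {v v' : 𝒱.X} (h : π v = π v') :
    posOf K 𝒱 π τ v = posOf K 𝒱 π τ v' := by
  simp only [posOf, h]

lemma eVec_fixed {v v' : 𝒱.X} (h : π v = π v') (ℓ : Line (Lam K 𝒱 π τ) ι) {n : ι}
    {a : Lam K 𝒱 π τ} (hn : ℓ.idxFun n = some a) :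
    eVec K 𝒱 π τ ι ℓ v n = eVec K 𝒱 π τ ι ℓ v' n := by
  simp only [eVec, hn, Option.elim, posOf_congr K 𝒱 π τ h]

lemma eVec_lt {v v' : 𝒱.X} (hpart : π v = π v') (hv : 𝒱.ord.lt v v')
    (ℓ : Line (Lam K 𝒱 π τ) ι) :
    toLex (eVec K 𝒱 π τ ι ℓ v) < toLex (eVec K 𝒱 π τ ι ℓ v') := by
  have hS : (Finset.univ.filter (fun n => ℓ.idxFun n = none)).Nonempty := by
    obtain ⟨n, hn⟩ := ℓ.proper
    exact ⟨n, by simp [hn]⟩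
  set i := (Finset.univ.filter (fun n => ℓ.idxFun n = none)).min' hS with hi
  have hiS : ℓ.idxFun i = none := by
    have := Finset.min'_mem _ hS
    rw [← hi] at this
    simpa using this
  refine ⟨i, fun j hj => ?_, ?_⟩
  · rcases hcase : ℓ.idxFun j with _ | a
    · exact absurd (Finset.min'_le _ j (by simp [hcase])) (not_le.mpr hj)
    · exact eVec_fixed K 𝒱 π τ ι hpart ℓ hcase
  · simpa only [Pi.toLex_apply, eVec, hiS, Option.elim] using hv

lemma part_eVec {v : 𝒱.X} (hv : v ∈ Cset K 𝒱 π τ) (ℓ : Line (Lam K 𝒱 π τ) ι) (n : ι) :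
    π (eVec K 𝒱 π τ ι ℓ v n) = π v := by
  rcases hcase : ℓ.idxFun n with _ | a
  · simp [eVec, hcase]
  · obtain ⟨b, x, hbx⟩ := hv
    have hex : ∃ y, τ y = π v := ⟨x, by rw [← hbx]; exact (b.2.2 x).symm⟩
    simp only [eVec, hcase, Option.elim]
    rw [a.2.2 (posOf K 𝒱 π τ v), posOf, dif_pos hex]
    exact hex.choose_spec

/-- Part map on the stage structure. -/
noncomputable def partMap : VT K 𝒱 π τ ι → Fin N
  | Sum.inl h => π (h i₀)
  | Sum.inr p => π p.2

lemma keyMap_fst (z : VT K 𝒱 π τ ι) :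
    (ofLex (keyMap K 𝒱 π τ ι i₀ ℓ₀ z)).1 = partMap K 𝒱 π τ ι i₀ z := by
  cases z <;> rfl

lemma partMap_mono {z z' : VT K 𝒱 π τ ι} (h : (stageOrd K 𝒱 π τ ι i₀ ℓ₀).le z z') :
    partMap K 𝒱 π τ ι i₀ z ≤ partMap K 𝒱 π τ ι i₀ z' := by
  rw [stageOrd_le_iff] at h
  rcases eq_or_lt_of_le h with heq | hlt
  · rw [← keyMap_fst K 𝒱 π τ ι i₀ ℓ₀ z, ← keyMap_fst K 𝒱 π τ ι i₀ ℓ₀ z', heq]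
  · have := Prod.Lex.lt_iff (x := toLex (ofLex (keyMap K 𝒱 π τ ι i₀ ℓ₀ z))) (y := toLex (ofLex (keyMap K 𝒱 π τ ι i₀ ℓ₀ z')))
    rw [toLex_ofLex, toLex_ofLex] at this
    rcases this.mp hlt with h1 | ⟨h1, -⟩
    · rw [← keyMap_fst K 𝒱 π τ ι i₀ ℓ₀ z, ← keyMap_fst K 𝒱 π τ ι i₀ ℓ₀ z']
      exact le_of_lt h1
    · rw [← keyMap_fst K 𝒱 π τ ι i₀ ℓ₀ z, ← keyMap_fst K 𝒱 π τ ι i₀ ℓ₀ z', h1]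

lemma partMap_Phi {v : 𝒱.X} (ℓ : Line (Lam K 𝒱 π τ) ι) :
    partMap K 𝒱 π τ ι i₀ (Phi K 𝒱 π τ ι ℓ v) = π v := by
  by_cases hv : v ∈ Cset K 𝒱 π τ
  · simp only [Phi, if_pos hv, partMap]
    exact part_eVec K 𝒱 π τ ι hv ℓ i₀
  · simp only [Phi, if_neg hv, partMap]

lemma Phi_strictMono (hπ : ∀ a b : 𝒱.X, 𝒱.ord.le a b → π a ≤ π b)
    (ℓ : Line (Lam K 𝒱 π τ) ι) {v v' : 𝒱.X} (hv : 𝒱.ord.lt v v') :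
    (stageOrd K 𝒱 π τ ι i₀ ℓ₀).lt (Phi K 𝒱 π τ ι ℓ v) (Phi K 𝒱 π τ ι ℓ v') := by
  rw [stageOrd_lt_iff]
  have hle : π v ≤ π v' := hπ v v' (le_of_lt hv)
  -- both keys have the same shape
  have hkey : ∀ u : 𝒱.X, ∃ fl lx, keyMap K 𝒱 π τ ι i₀ ℓ₀ (Phi K 𝒱 π τ ι ℓ u)
      = toLex (π u, toLex (toLex (eVec K 𝒱 π τ ι ℓ u), toLex (fl, lx))) := by
    intro u
    by_cases hu : u ∈ Cset K 𝒱 π τ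
    · refine ⟨0, ℓ₀, ?_⟩
      simp only [Phi, if_pos hu, keyMap]
      rw [part_eVec K 𝒱 π τ ι hu ℓ i₀]
    · exact ⟨1, ℓ, by simp only [Phi, if_neg hu, keyMap]⟩
  obtain ⟨fl, lx, hk⟩ := hkey v
  obtain ⟨fl', lx', hk'⟩ := hkey v'
  rw [hk, hk', Prod.Lex.lt_iff]
  rcases lt_or_eq_of_le hle with hlt | heq
  · exact Or.inl hlt
  · refine Or.inr ⟨heq, ?_⟩
    rw [Prod.Lex.lt_iff]
    exact Or.inl (eVec_lt K 𝒱 π τ ι heq hv ℓ)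


lemma lam_inj (a : Lam K 𝒱 π τ) : Function.Injective a.1 := by
  have : StrictMono a.1 := fun x y h => a.2.1.1 x y h
  exact this.injective

lemma lam_diag (hτ : StrictMono τ) (a b : Lam K 𝒱 π τ) {x y : K.X}
    (h : a.1 x = b.1 y) : x = y := by
  apply hτ.injective
  rw [← a.2.2 x, ← b.2.2 y, h]

lemma Phi_inj (ℓ : Line (Lam K 𝒱 π τ) ι) : Function.Injective (Phi K 𝒱 π τ ι ℓ) := by
  intro v v' h
  by_cases hv : v ∈ Cset K 𝒱 π τ
  · by_cases hv' : v' ∈ Cset K 𝒱 π τ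
    · simp only [Phi, if_pos hv, if_pos hv'] at h
      obtain ⟨n, hn⟩ := ℓ.proper
      have := congrFun (Sum.inl.inj h) n
      simpa only [eVec, hn, Option.elim] using this
    · simp only [Phi, if_pos hv, if_neg hv'] at h
      exact absurd h (by simp)
  · by_cases hv' : v' ∈ Cset K 𝒱 π τ
    · simp only [Phi, if_neg hv, if_pos hv'] at h
      exact absurd h (by simp)
    · simp only [Phi, if_neg hv, if_neg hv'] at h
      exact (Prod.ext_iff.mp (Sum.inr.inj h)).2

lemma Phi_comp_lam (hτ : StrictMono τ) (ℓ : Line (Lam K 𝒱 π τ) ι) (a : Lam K 𝒱 π τ) :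
    Phi K 𝒱 π τ ι ℓ ∘ a.1 = kw K 𝒱 π τ ι (fun n => (ℓ.idxFun n).getD a) := by
  funext x
  have hC : a.1 x ∈ Cset K 𝒱 π τ := ⟨a, x, rfl⟩
  simp only [Function.comp_apply, Phi, if_pos hC, kw]
  congr 1
  funext n
  rcases hcase : ℓ.idxFun n with _ | b
  · simp [eVec, hcase]
  · simp only [eVec, hcase, Option.elim, Option.getD_some]
    rw [posOf_lam K 𝒱 π τ hτ a x]

lemma kw_part (w : ι → Lam K 𝒱 π τ) (x : K.X) :
    partMap K 𝒱 π τ ι i₀ (kw K 𝒱 π τ ι w x) = τ x := by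
  simp only [kw, partMap]
  exact (w i₀).2.2 x

lemma point_inl (hτ : StrictMono τ) {ℓ₁ ℓ₂ : Line (Lam K 𝒱 π τ) ι} (hne : ℓ₁ ≠ ℓ₂)
    {v₁ v₂ : 𝒱.X} (h : Phi K 𝒱 π τ ι ℓ₁ v₁ = Phi K 𝒱 π τ ι ℓ₂ v₂) :
    v₁ ∈ Cset K 𝒱 π τ ∧ v₂ ∈ Cset K 𝒱 π τ ∧
      eVec K 𝒱 π τ ι ℓ₁ v₁ = eVec K 𝒱 π τ ι ℓ₂ v₂ := by
  by_cases hv : v₁ ∈ Cset K 𝒱 π τ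
  · by_cases hv' : v₂ ∈ Cset K 𝒱 π τ
    · simp only [Phi, if_pos hv, if_pos hv'] at h
      exact ⟨hv, hv', Sum.inl.inj h⟩
    · simp only [Phi, if_pos hv, if_neg hv'] at h
      exact absurd h (by simp)
  · by_cases hv' : v₂ ∈ Cset K 𝒱 π τ
    · simp only [Phi, if_neg hv, if_pos hv'] at h
      exact absurd h (by simp)
    · simp only [Phi, if_neg hv, if_neg hv'] at h
      exact absurd (Prod.ext_iff.mp (Sum.inr.inj h)).1 hne

lemma part_of_Cset (hτ : StrictMono τ) {v : 𝒱.X} (hv : v ∈ Cset K 𝒱 π τ) :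
    τ (posOf K 𝒱 π τ v) = π v := by
  obtain ⟨a, x, hax⟩ := hv
  rw [← hax, posOf_lam K 𝒱 π τ hτ a x, (a.2.2 x)]

lemma part_eq_of_eVec (hτ : StrictMono τ) {ℓ₁ ℓ₂ : Line (Lam K 𝒱 π τ) ι}
    {v₁ v₂ : 𝒱.X} (hv₂ : v₂ ∈ Cset K 𝒱 π τ)
    (h : eVec K 𝒱 π τ ι ℓ₁ v₁ = eVec K 𝒱 π τ ι ℓ₂ v₂) : π v₁ = π v₂ := by
  obtain ⟨n, hn⟩ := ℓ₁.proper
  have h1 := congrFun h n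
  rcases hcase : ℓ₂.idxFun n with _ | b
  · simp only [eVec, hn, hcase, Option.elim] at h1
    rw [h1]
  · simp only [eVec, hn, hcase, Option.elim] at h1
    rw [h1, b.2.2, part_of_Cset K 𝒱 π τ hτ hv₂]

lemma relConsist (hτ : StrictMono τ) {ℓ₁ ℓ₂ : Line (Lam K 𝒱 π τ) ι} {R : L.Rel}
    {η₁ η₂ : L.arR R → 𝒱.X} (h : Phi K 𝒱 π τ ι ℓ₁ ∘ η₁ = Phi K 𝒱 π τ ι ℓ₂ ∘ η₂)
    (hη₂ : η₂ ∈ 𝒱.rel R) : η₁ ∈ 𝒱.rel R := by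
  by_cases hll : ℓ₁ = ℓ₂
  · subst hll
    have : η₁ = η₂ := funext fun u => Phi_inj K 𝒱 π τ ι ℓ₁ (congrFun h u)
    rwa [this]
  · have hpt := fun u => point_inl K 𝒱 π τ ι hτ hll (congrFun h u)
    by_cases hcom : ∃ n, ℓ₁.idxFun n = none ∧ ℓ₂.idxFun n = none
    · obtain ⟨n, hn1, hn2⟩ := hcom
      have : η₁ = η₂ := by
        funext u
        have := congrFun (hpt u).2.2 n
        simpa only [eVec, hn1, hn2, Option.elim] using this
      rwa [this]
    · push_neg at hcom
      obtain ⟨n, hn⟩ := ℓ₁.proper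
      rcases hbn : ℓ₂.idxFun n with _ | b
      · exact absurd hbn (hcom n hn)
      obtain ⟨m, hm⟩ := ℓ₂.proper
      rcases ham : ℓ₁.idxFun m with _ | a
      · exact absurd hm (hcom m ham)
      -- pointwise equations
      have heq1 : ∀ u, η₁ u = b.1 (posOf K 𝒱 π τ (η₂ u)) := by
        intro u
        have := congrFun (hpt u).2.2 n
        simpa only [eVec, hn, hbn, Option.elim] using this
      have heq2 : ∀ u, a.1 (posOf K 𝒱 π τ (η₁ u)) = η₂ u := by
        intro u
        have := congrFun (hpt u).2.2 m
        simpa only [eVec, ham, hm, Option.elim] using this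
      have hpos : ∀ u, posOf K 𝒱 π τ (η₁ u) = posOf K 𝒱 π τ (η₂ u) := by
        intro u
        apply posOf_congr
        rw [heq1 u, b.2.2, part_of_Cset K 𝒱 π τ hτ (hpt u).2.1]
      set ζ : L.arR R → K.X := fun u => posOf K 𝒱 π τ (η₂ u) with hζ
      have hη₁ : η₁ = b.1 ∘ ζ := funext fun u => heq1 u
      have hη₂' : η₂ = a.1 ∘ ζ := by
        funext u
        rw [← heq2 u, hpos u]
        rfl
      have hzK : ζ ∈ K.rel R := by
        rw [a.2.1.2.1 R ζ]
        rwa [← hη₂']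
      rw [hη₁]
      exact (b.2.1.2.1 R ζ).mp hzK

/-- "Closed" subsets of `K`: the dual functions there only depend on the restriction. -/
def CK (S : Set K.X) : Prop :=
  ∀ (F : L.Fn) (δ δ' : K.X → L.arF1 F), (∀ t ∈ S, δ t = δ' t) →
    ∀ x ∈ S, K.fn F δ x = K.fn F δ' x

omit [Nonempty K.X] in
lemma CK_univ : CK K Set.univ := by
  intro F δ δ' hag x _
  have : δ = δ' := funext fun t => hag t trivial
  rw [this]

omit [Nonempty K.X] in
lemma CK_inter {S T : Set K.X} (hS : CK K S) (hT : CK K T) : CK K (S ∩ T) := by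
  intro F δ δ' hag x hx
  set δ'' : K.X → L.arF1 F := fun t => if t ∈ S then δ t else δ' t with hδ''
  have h1 : K.fn F δ x = K.fn F δ'' x := by
    apply hS F δ δ'' (fun t ht => by simp [hδ'', if_pos ht]) x hx.1
  have h2 : K.fn F δ'' x = K.fn F δ' x := by
    apply hT F δ'' δ' ?_ x hx.2
    intro t ht
    by_cases htS : t ∈ S
    · simp only [hδ'', if_pos htS]
      exact hag t ⟨htS, ht⟩
    · simp only [hδ'', if_neg htS]
  rw [h1, h2]

lemma CK_pair (hτ : StrictMono τ) (a b : Lam K 𝒱 π τ) :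
    CK K {t | a.1 t = b.1 t} := by
  intro F δ δ' hag x hx
  set γ : 𝒱.X → L.arF1 F := fun v =>
    if h : ∃ t, a.1 t = v then δ h.choose
    else if h' : ∃ t, b.1 t = v then δ' h'.choose else δ x with hγ
  have hga : γ ∘ a.1 = δ := by
    funext t
    have hex : ∃ t', a.1 t' = a.1 t := ⟨t, rfl⟩
    simp only [Function.comp_apply, hγ, dif_pos hex]
    rw [lam_inj K 𝒱 π τ a hex.choose_spec]
  have hgb : γ ∘ b.1 = δ' := by
    funext t
    by_cases hex : ∃ t', a.1 t' = b.1 t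
    · have ht0 : hex.choose = t := lam_diag K 𝒱 π τ hτ a b hex.choose_spec
      have htD : a.1 t = b.1 t := by
        have := hex.choose_spec
        rwa [ht0] at this
      simp only [Function.comp_apply, hγ, dif_pos hex, ht0]
      exact hag t htD
    · have hex' : ∃ t', b.1 t' = b.1 t := ⟨t, rfl⟩
      simp only [Function.comp_apply, hγ, dif_neg hex, dif_pos hex']
      rw [lam_inj K 𝒱 π τ b hex'.choose_spec]
  have ha := congrFun (a.2.1.2.2 F γ) x
  have hb := congrFun (b.2.1.2.2 F γ) x
  simp only [Function.comp_apply] at ha hb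
  rw [hga] at ha
  rw [hgb] at hb
  rw [ha, hb, hx]

lemma CK_word (hτ : StrictMono τ) (w w' : ι → Lam K 𝒱 π τ) :
    CK K {t | ∀ n, (w n).1 t = (w' n).1 t} := by
  have hfin : ∀ s : Finset ι, CK K {t | ∀ n ∈ s, (w n).1 t = (w' n).1 t} := by
    intro s
    induction s using Finset.induction with
    | empty =>
        have : {t : K.X | ∀ n ∈ (∅ : Finset ι), (w n).1 t = (w' n).1 t} = Set.univ := by
          ext t; simp
        rw [this]
        exact CK_univ K
    | @insert n s hns ih =>
        have : {t : K.X | ∀ m ∈ insert n s, (w m).1 t = (w' m).1 t}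
            = {t | (w n).1 t = (w' n).1 t} ∩ {t | ∀ m ∈ s, (w m).1 t = (w' m).1 t} := by
          ext t
          simp only [Set.mem_inter_iff, Set.mem_setOf_eq, Finset.mem_insert]
          constructor
          · intro h
            exact ⟨h n (Or.inl rfl), fun m hm => h m (Or.inr hm)⟩
          · rintro ⟨h1, h2⟩ m (rfl | hm)
            · exact h1
            · exact h2 m hm
        rw [this]
        exact CK_inter K (CK_pair K 𝒱 π τ hτ (w n) (w' n)) ih
  have : {t : K.X | ∀ n, (w n).1 t = (w' n).1 t}
      = {t | ∀ n ∈ (Finset.univ : Finset ι), (w n).1 t = (w' n).1 t} := by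
    ext t; simp
  rw [this]
  exact hfin Finset.univ

lemma wordPair (hτ : StrictMono τ) (w w' : ι → Lam K 𝒱 π τ) {x : K.X}
    (hx : kw K 𝒱 π τ ι w x = kw K 𝒱 π τ ι w' x)
    (F : L.Fn) (γ : VT K 𝒱 π τ ι → L.arF1 F) :
    K.fn F (γ ∘ kw K 𝒱 π τ ι w) x = K.fn F (γ ∘ kw K 𝒱 π τ ι w') x := by
  set D : Set K.X := {t | ∀ n, (w n).1 t = (w' n).1 t} with hD
  have hxD : x ∈ D := by
    intro n
    exact congrFun (Sum.inl.inj hx) n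
  apply CK_word K 𝒱 π τ ι hτ w w' F _ _ ?_ x hxD
  intro t ht
  have : kw K 𝒱 π τ ι w t = kw K 𝒱 π τ ι w' t := by
    simp only [kw]
    congr 1
    funext n
    exact ht n
  simp only [Function.comp_apply, this]

lemma fnConsist (hτ : StrictMono τ) {ℓ₁ ℓ₂ : Line (Lam K 𝒱 π τ) ι} {v₁ v₂ : 𝒱.X}
    (h : Phi K 𝒱 π τ ι ℓ₁ v₁ = Phi K 𝒱 π τ ι ℓ₂ v₂)
    (F : L.Fn) (γ : VT K 𝒱 π τ ι → L.arF1 F) :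
    𝒱.fn F (γ ∘ Phi K 𝒱 π τ ι ℓ₁) v₁ = 𝒱.fn F (γ ∘ Phi K 𝒱 π τ ι ℓ₂) v₂ := by
  by_cases hll : ℓ₁ = ℓ₂
  · subst hll
    rw [Phi_inj K 𝒱 π τ ι ℓ₁ h]
  · obtain ⟨hv₁, hv₂, hev⟩ := point_inl K 𝒱 π τ ι hτ hll h
    obtain ⟨a₁, x₁, hax₁⟩ := hv₁
    obtain ⟨a₂, x₂, hax₂⟩ := hv₂
    have hpart : π v₁ = π v₂ := part_eq_of_eVec K 𝒱 π τ ι hτ ⟨a₂, x₂, hax₂⟩ hev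
    have hxx : x₁ = x₂ := by
      apply hτ.injective
      rw [← a₁.2.2 x₁, ← a₂.2.2 x₂, hax₁, hax₂, hpart]
    subst hxx
    set w := fun n => (ℓ₁.idxFun n).getD a₁ with hw
    set w' := fun n => (ℓ₂.idxFun n).getD a₂ with hw'
    have h1 : Phi K 𝒱 π τ ι ℓ₁ ∘ a₁.1 = kw K 𝒱 π τ ι w := Phi_comp_lam K 𝒱 π τ ι hτ ℓ₁ a₁
    have h2 : Phi K 𝒱 π τ ι ℓ₂ ∘ a₂.1 = kw K 𝒱 π τ ι w' := Phi_comp_lam K 𝒱 π τ ι hτ ℓ₂ a₂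
    have hkx : kw K 𝒱 π τ ι w x₁ = kw K 𝒱 π τ ι w' x₁ := by
      rw [← h1, ← h2]
      simp only [Function.comp_apply, hax₁, hax₂, h]
    have e1 : 𝒱.fn F (γ ∘ Phi K 𝒱 π τ ι ℓ₁) v₁ = K.fn F (γ ∘ kw K 𝒱 π τ ι w) x₁ := by
      rw [← hax₁]
      have := congrFun (a₁.2.1.2.2 F (γ ∘ Phi K 𝒱 π τ ι ℓ₁)) x₁
      simp only [Function.comp_apply] at this ⊢
      rw [← this]
      congr 1
      rw [← h1]
      rfl
    have e2 : 𝒱.fn F (γ ∘ Phi K 𝒱 π τ ι ℓ₂) v₂ = K.fn F (γ ∘ kw K 𝒱 π τ ι w') x₁ := by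
      rw [← hax₂]
      have := congrFun (a₂.2.1.2.2 F (γ ∘ Phi K 𝒱 π τ ι ℓ₂)) x₁
      simp only [Function.comp_apply] at this ⊢
      rw [← this]
      congr 1
      rw [← h2]
      rfl
    rw [e1, e2]
    exact wordPair K 𝒱 π τ ι hτ w w' hkx F γ

variable (hfn : ∀ F : L.Fn, Nonempty (L.arF1 F) → Nonempty (L.arF2 F))

/-- The stage structure. -/
noncomputable def stageStr : OrdStr L where
  X := VT K 𝒱 π τ ι
  fin := inferInstance
  ord := stageOrd K 𝒱 π τ ι i₀ ℓ₀
  rel := fun R => {θ | ∃ ℓ η, η ∈ 𝒱.rel R ∧ θ = Phi K 𝒱 π τ ι ℓ ∘ η}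
  fn := fun F γ z =>
    if h : ∃ p : Line (Lam K 𝒱 π τ) ι × 𝒱.X, Phi K 𝒱 π τ ι p.1 p.2 = z
    then 𝒱.fn F (γ ∘ Phi K 𝒱 π τ ι h.choose.1) h.choose.2
    else (hfn F ⟨γ z⟩).some

lemma Phi_isOrdHom (hτ : StrictMono τ) (hπ : ∀ a b : 𝒱.X, 𝒱.ord.le a b → π a ≤ π b)
    (ℓ : Line (Lam K 𝒱 π τ) ι) :
    IsOrdHom 𝒱 (stageStr K 𝒱 π τ ι i₀ ℓ₀ hfn) (Phi K 𝒱 π τ ι ℓ) := by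
  refine ⟨fun a b hab => Phi_strictMono K 𝒱 π τ ι i₀ ℓ₀ hπ ℓ hab, fun R η => ?_, fun F γ => ?_⟩
  · constructor
    · intro hη
      exact ⟨ℓ, η, hη, rfl⟩
    · rintro ⟨ℓ', η', hη', heq⟩
      exact relConsist K 𝒱 π τ ι hτ heq hη'
  · funext v
    have hex : ∃ p : Line (Lam K 𝒱 π τ) ι × 𝒱.X,
        Phi K 𝒱 π τ ι p.1 p.2 = Phi K 𝒱 π τ ι ℓ v := ⟨(ℓ, v), rfl⟩
    simp only [Function.comp_apply, stageStr, dif_pos hex]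
    exact (fnConsist K 𝒱 π τ ι hτ hex.choose_spec F γ).symm

end Stage

/-- The stage lemma: one Hales–Jewett application handles one pattern `τ`. -/
theorem stage {L : FinLanguage} (K : OrdStr L) (hKne : Nonempty K.X)
    (𝒱 : OrdStr L) {N : ℕ} (π : 𝒱.X → Fin N)
    (hπ : ∀ a b : 𝒱.X, 𝒱.ord.le a b → π a ≤ π b) (hVne : Nonempty 𝒱.X)
    (hfn : ∀ F : L.Fn, Nonempty (L.arF1 F) → Nonempty (L.arF2 F))
    (τ : K.X → Fin N) (hτ : StrictMono τ) (r : ℕ) (hr : 0 < r) :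
    ∃ (𝒱' : OrdStr L) (π' : 𝒱'.X → Fin N),
      (∀ a b : 𝒱'.X, 𝒱'.ord.le a b → π' a ≤ π' b) ∧ Nonempty 𝒱'.X ∧
      ∀ χ : (K.X → 𝒱'.X) → Fin r,
        ∃ Φ : 𝒱.X → 𝒱'.X, IsOrdHom 𝒱 𝒱' Φ ∧ (∀ v, π' (Φ v) = π v) ∧
          ∃ c : Fin r, ∀ α : K.X → 𝒱.X,
            IsOrdHom K 𝒱 α → (∀ x, π (α x) = τ x) → χ (Φ ∘ α) = c := by
  haveI := hKne
  obtain ⟨ι, ιfin, hHJ⟩ := Line.exists_mono_in_high_dimension (Lam K 𝒱 π τ) (Fin r)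
  haveI := ιfin
  letI : LinearOrder ι := arbLO ι
  have hline : Nonempty (Line (Lam K 𝒱 π τ) ι) := ⟨(hHJ (fun _ => ⟨0, hr⟩)).choose⟩
  obtain ⟨ℓ₀⟩ := hline
  obtain ⟨i₀, -⟩ := ℓ₀.proper
  refine ⟨stageStr K 𝒱 π τ ι i₀ ℓ₀ hfn, partMap K 𝒱 π τ ι i₀,
    fun a b h => partMap_mono K 𝒱 π τ ι i₀ ℓ₀ h, ⟨Sum.inl (fun _ => hVne.some)⟩, fun χ => ?_⟩
  obtain ⟨ℓ, c, hmono⟩ := hHJ (fun w => χ (kw K 𝒱 π τ ι w))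
  refine ⟨Phi K 𝒱 π τ ι ℓ, Phi_isOrdHom K 𝒱 π τ ι i₀ ℓ₀ hfn hτ hπ ℓ,
    fun v => partMap_Phi K 𝒱 π τ ι i₀ ℓ, c, fun α hα hpat => ?_⟩
  have hc := hmono ⟨α, hα, hpat⟩
  have harg : Phi K 𝒱 π τ ι ℓ ∘ α = kw K 𝒱 π τ ι (ℓ (⟨α, hα, hpat⟩ : Lam K 𝒱 π τ)) :=
    Phi_comp_lam K 𝒱 π τ ι hτ ℓ ⟨α, hα, hpat⟩
  refine (congrArg χ harg).trans ?_
  exact hc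

section Start

variable {L : FinLanguage} (M : OrdStr L) (N : ℕ)

/-- Strictly monotone placements of `M` into `Fin N`. -/
def SigT : Type := {σ : M.X → Fin N // StrictMono σ}

instance : Finite (SigT M N) := by
  unfold SigT; infer_instance

noncomputable instance : LinearOrder (SigT M N) := arbLO _

/-- Underlying type of the starting structure: one copy of `M` per placement. -/
def V0 : Type := SigT M N × M.X

instance : Finite (V0 M N) := by
  unfold V0; infer_instance

def key0 : V0 M N → Fin N ×ₗ (SigT M N ×ₗ M.X) :=
  fun p => toLex (p.1.1 p.2, toLex (p.1, p.2))

lemma key0_inj : Function.Injective (key0 M N) := by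
  intro p q h
  simp only [key0, toLex_inj, Prod.mk.injEq] at h
  exact Prod.ext_iff.mpr ⟨h.2.1, h.2.2⟩

/-- The copy of `M` associated to a placement. -/
def beta (σ : SigT M N) : M.X → V0 M N := fun x => (σ, x)

/-- The starting structure: a disjoint union of copies of `M`, one per placement. -/
noncomputable def startStr : OrdStr L where
  X := V0 M N
  fin := inferInstance
  ord := LinearOrder.lift' (key0 M N) (key0_inj M N)
  rel := fun R => {θ | ∃ (σ : SigT M N) (η : L.arR R → M.X),
    η ∈ M.rel R ∧ θ = beta M N σ ∘ η}
  fn := fun F γ p => M.fn F (γ ∘ beta M N p.1) p.2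

def pi0 : V0 M N → Fin N := fun p => p.1.1 p.2

lemma pi0_mono : ∀ a b : V0 M N, (startStr M N).ord.le a b → pi0 M N a ≤ pi0 M N b := by
  intro a b h
  have h' : key0 M N a ≤ key0 M N b := h
  rcases eq_or_lt_of_le h' with heq | hlt
  · have := key0_inj M N heq
    rw [this]
  · have := (Prod.Lex.lt_iff (x := toLex (ofLex (key0 M N a))) (y := toLex (ofLex (key0 M N b)))).mp (by
      rwa [toLex_ofLex, toLex_ofLex])
    rcases this with h1 | ⟨h1, -⟩
    · exact le_of_lt h1
    · exact le_of_eq h1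

lemma beta_isOrdHom (σ : SigT M N) : IsOrdHom M (startStr M N) (beta M N σ) := by
  refine ⟨fun a b hab => ?_, fun R η => ?_, fun F γ => rfl⟩
  · show key0 M N (beta M N σ a) < key0 M N (beta M N σ b)
    rw [key0, key0, Prod.Lex.lt_iff]
    exact Or.inl (σ.2 hab)
  · constructor
    · intro hη
      exact ⟨σ, η, hη, rfl⟩
    · rintro ⟨σ', η', hη', heq⟩
      have : η = η' := by
        funext u
        have := congrFun heq u
        exact
          (Prod.ext_iff.mp this).2
      rwa [this]

lemma pi0_beta (σ : SigT M N) (x : M.X) : pi0 M N (beta M N σ x) = σ.1 x := rfl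

end Start

/-- Iterating the stage lemma over a list of patterns. -/
theorem mainInd {L : FinLanguage} (K : OrdStr L) (hKne : Nonempty K.X)
    (hfn : ∀ F : L.Fn, Nonempty (L.arF1 F) → Nonempty (L.arF2 F))
    {N r : ℕ} (hr : 0 < r) (ts : List {τ : K.X → Fin N // StrictMono τ}) :
    ∀ (𝒱 : OrdStr L) (π : 𝒱.X → Fin N),
      (∀ a b : 𝒱.X, 𝒱.ord.le a b → π a ≤ π b) → Nonempty 𝒱.X →
    ∃ (W : OrdStr L) (πW : W.X → Fin N),
      (∀ a b : W.X, W.ord.le a b → πW a ≤ πW b) ∧ Nonempty W.X ∧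
      ∀ χ : (K.X → W.X) → Fin r,
        ∃ Ψ : 𝒱.X → W.X, IsOrdHom 𝒱 W Ψ ∧ (∀ v, πW (Ψ v) = π v) ∧
          ∃ κ : {τ : K.X → Fin N // StrictMono τ} → Fin r,
            ∀ τ ∈ ts, ∀ α : K.X → 𝒱.X, IsOrdHom K 𝒱 α → (∀ x, π (α x) = τ.1 x) →
              χ (Ψ ∘ α) = κ τ := by
  induction ts with
  | nil =>
      intro 𝒱 π hπ hVne
      exact ⟨𝒱, π, hπ, hVne, fun χ =>
        ⟨id, isOrdHom_id 𝒱, fun v => rfl, fun _ => ⟨0, hr⟩, fun τ hτ => absurd hτ (by simp)⟩⟩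
  | cons τ ts ih =>
      intro 𝒱 π hπ hVne
      obtain ⟨𝒱₁, π₁, hπ₁, hV₁, hstage⟩ := stage K hKne 𝒱 π hπ hVne hfn τ.1 τ.2 r hr
      obtain ⟨W, πW, hπW, hWne, hmain⟩ := ih 𝒱₁ π₁ hπ₁ hV₁
      refine ⟨W, πW, hπW, hWne, fun χ => ?_⟩
      obtain ⟨Ψ₁, hΨ₁, hΨ₁p, κ₁, hκ₁⟩ := hmain χ
      obtain ⟨Φ, hΦ, hΦp, c, hc⟩ := hstage (fun u => χ (Ψ₁ ∘ u))
      refine ⟨Ψ₁ ∘ Φ, isOrdHom_comp hΦ hΨ₁, fun v => by rw [Function.comp_apply, hΨ₁p, hΦp],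
        fun τ' => if τ' = τ then c else κ₁ τ', ?_⟩
      intro τ' hτ' α hα hpat
      show χ ((Ψ₁ ∘ Φ) ∘ α) = if τ' = τ then c else κ₁ τ'
      by_cases hee : τ' = τ
      · rw [if_pos hee]
        subst hee
        have := hc α hα hpat
        rwa [Function.comp_assoc]
      · rw [if_neg hee]
        have hts : τ' ∈ ts := by
          rcases List.mem_cons.mp hτ' with h | h
          · exact absurd h hee
          · exact h
        have := hκ₁ τ' hts (Φ ∘ α) (isOrdHom_comp hα hΦ)
          (fun x => by rw [Function.comp_apply, hΦp, hpat])
        rwa [Function.comp_assoc]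

end Solecki

/-- **Solecki's direct theorem**: for any `Fin`-language `ℒ`, the category
`(ℒ, (Fin, ≤))` of finite linearly ordered `ℒ`-structures with increasing injective
homomorphisms has the Ramsey property. -/

theorem solecki_direct (L : FinLanguage) (K M : OrdStr L) (r : ℕ) (hr : 0 < r) :
    ∃ Z : OrdStr L, ∀ χ : (K.X → Z.X) → Fin r,
      ∃ g : M.X → Z.X, IsOrdHom M Z g ∧
        ∃ c : Fin r, ∀ f : K.X → M.X, IsOrdHom K M f → χ (g ∘ f) = c := by
  classical
  by_cases hK : Nonempty K.X
  · by_cases hM : Nonempty M.X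
    · -- main case
      have hfn : ∀ F : L.Fn, Nonempty (L.arF1 F) → Nonempty (L.arF2 F) := by
        intro F ha
        exact ⟨M.fn F (fun _ => ha.some) hM.some⟩
      obtain ⟨N, hN⟩ := Solecki.ordRamsey K.X M.X r hr
      obtain ⟨σ₀, hσ₀, -⟩ := hN (fun _ => ⟨0, hr⟩)
      have hV0ne : Nonempty (Solecki.V0 M N) := ⟨(⟨σ₀, hσ₀⟩, hM.some)⟩
      haveI : Fintype {τ : K.X → Fin N // StrictMono τ} := Fintype.ofFinite _
      obtain ⟨Z, πZ, hπZ, hZne, hmain⟩ := Solecki.mainInd K hK hfn hr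
        (Finset.univ : Finset {τ : K.X → Fin N // StrictMono τ}).toList
        (Solecki.startStr M N) (Solecki.pi0 M N) (Solecki.pi0_mono M N) hV0ne
      refine ⟨Z, fun χ => ?_⟩
      obtain ⟨Ψ, hΨ, hΨp, κ, hκ⟩ := hmain χ
      obtain ⟨σ, hσ, c, hc⟩ := hN (fun u => if h : StrictMono u then κ ⟨u, h⟩ else ⟨0, hr⟩)
      refine ⟨Ψ ∘ Solecki.beta M N ⟨σ, hσ⟩,
        Solecki.isOrdHom_comp (Solecki.beta_isOrdHom M N ⟨σ, hσ⟩) hΨ, c, fun f hf => ?_⟩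
      have hfsm : StrictMono f := fun a b h => hf.1 a b h
      have h1 := hc f hfsm
      have h3 : κ ⟨σ ∘ f, hσ.comp hfsm⟩ = c := by
        rw [← h1]
        exact (dif_pos (hσ.comp hfsm) (t := fun h => κ ⟨σ ∘ f, h⟩)).symm
      have h2 := hκ ⟨σ ∘ f, hσ.comp hfsm⟩
        (Finset.mem_toList.mpr (Finset.mem_univ _))
        (Solecki.beta M N ⟨σ, hσ⟩ ∘ f)
        (Solecki.isOrdHom_comp hf (Solecki.beta_isOrdHom M N ⟨σ, hσ⟩))
        (fun x => rfl)
      exact h2.trans h3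
    · refine ⟨M, fun χ => ⟨id, Solecki.isOrdHom_id M, ⟨0, hr⟩, fun f hf => ?_⟩⟩
      exact absurd ⟨f hK.some⟩ hM
  · haveI : IsEmpty K.X := not_nonempty_iff.mp hK
    refine ⟨M, fun χ => ⟨id, Solecki.isOrdHom_id M,
      χ (id ∘ fun x : K.X => isEmptyElim x), fun f hf => ?_⟩⟩
    have : f = fun x : K.X => isEmptyElim x := funext fun x => isEmptyElim x
    rw [this]
end

section
/- Let 𝒞 be a category, let U, V, X, Y be objects of 𝒞, and let π : X → U, ρ : Y → V, i₀ : U → V, and h : V → X be morphisms with h ∘ i₀ ∘ π = Id_X. Let N > 0 and let P be a set of morphisms e : X → Y in 𝒞, each satisfying ρ ∘ e = i₀ ∘ π. Suppose (Z, (f_ℓ)_ℓ, (f_ē)_ē) is a colimit cocone in 𝒞 over the underlying line diagram D : J → 𝒞. Then for each i ∈ {0,…,N−1} there exists a morphism v_i : Z → Y such that v_i ∘ f_ℓ = u_{ℓ,i} for every combinatorial line ℓ in P^N and v_i ∘ f_ē = ē_i for every ē ∈ P^N, where u_{ℓ,i} = Id_Y if i ∈ d(ℓ) and u_{ℓ,i}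 = ℓ_i ∘ h ∘ ρ if i ∉ d(ℓ). In particular, for every combinatorial line ℓ the colimit leg f_ℓ : Y → Z is a split monomorphism (it has a left inverse v_i for any i ∈ d(ℓ)). -/
open CategoryTheory

universe v u

/-- The morphism `u_{ℓ,i} : Y ⟶ Y`: the identity if `i ∈ d(ℓ)`, and `ℓ_i ∘ h ∘ ρ`
otherwise. Here `P` is a set of morphisms `X ⟶ Y`. -/
noncomputable def lineU {C : Type u} [Category.{v} C] {X Y V : C}
    (ρ : Y ⟶ V) (h : V ⟶ X) {P : Set (X ⟶ Y)} {N : ℕ}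
    (ℓ : Line (↥P) N) (i : Fin N) : Y ⟶ Y :=
  @dite _ (i ∈ ℓ.d) (Classical.dec _) (fun _ => 𝟙 Y)
    (fun hi => ρ ≫ h ≫ ((ℓ.fixed i hi : ↥P) : X ⟶ Y))

/-- If `h ∘ i₀ ∘ π = Id_X`, `P` is a set of morphisms `e : X ⟶ Y` with `ρ ∘ e = i₀ ∘ π`,
and `(Z, (f_ℓ)_ℓ, (f_ē)_ē)` is a colimit cocone in `𝒞` over the underlying line diagram
(the cocone and universal property are spelled out explicitly: each tuple on a line `ℓ`
has the form `ℓ.act p` and the corresponding diagram morphism is `ℓ(ē) = p`), then for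
every `i < N` there is `v_i : Z ⟶ Y` with `v_i ∘ f_ℓ = u_{ℓ,i}` for every line `ℓ` and
`v_i ∘ f_ē = ē_i` for every tuple `ē`; in particular every leg `f_ℓ` is a split
monomorphism. -/
theorem exists_v_split_mono
    {C : Type u} [Category.{v} C] {U V X Y : C}
    (π : X ⟶ U) (ρ : Y ⟶ V) (i₀ : U ⟶ V) (h : V ⟶ X)
    (hh : π ≫ i₀ ≫ h = 𝟙 X)
    (N : ℕ) (hN : 0 < N)
    (P : Set (X ⟶ Y)) (hP : ∀ e ∈ P, e ≫ ρ = π ≫ i₀)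
    (Z : C) (fL : Line (↥P) N → (Y ⟶ Z)) (fE : (Fin N → ↥P) → (X ⟶ Z))
    (hcocone : ∀ (ℓ : Line (↥P) N) (p : ↥P), (p : X ⟶ Y) ≫ fL ℓ = fE (ℓ.act p))
    (huniv : ∀ (W : C) (gL : Line (↥P) N → (Y ⟶ W)) (gE : (Fin N → ↥P) → (X ⟶ W)),
      (∀ (ℓ : Line (↥P) N) (p : ↥P), (p : X ⟶ Y) ≫ gL ℓ = gE (ℓ.act p)) →
      ∃! w : Z ⟶ W, (∀ ℓ, fL ℓ ≫ w = gL ℓ) ∧ (∀ e, fE e ≫ w = gE e)) :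
    (∀ i : Fin N, ∃ v : Z ⟶ Y,
      (∀ ℓ : Line (↥P) N, fL ℓ ≫ v = lineU ρ h ℓ i) ∧
      (∀ e : Fin N → ↥P, fE e ≫ v = (e i : X ⟶ Y))) ∧
    (∀ ℓ : Line (↥P) N, ∀ i ∈ ℓ.d, ∃ v : Z ⟶ Y,
      (∀ ℓ' : Line (↥P) N, fL ℓ' ≫ v = lineU ρ h ℓ' i) ∧ fL ℓ ≫ v = 𝟙 Y) := by
  have main : ∀ i : Fin N, ∃ v : Z ⟶ Y,
      (∀ ℓ : Line (↥P) N, fL ℓ ≫ v = lineU ρ h ℓ i) ∧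
      (∀ e : Fin N → ↥P, fE e ≫ v = (e i : X ⟶ Y)) := by
    intro i
    have compat : ∀ (ℓ : Line (↥P) N) (p : ↥P),
        (p : X ⟶ Y) ≫ lineU ρ h ℓ i = ((ℓ.act p i : ↥P) : X ⟶ Y) := by
      intro ℓ p
      unfold lineU Line.act
      by_cases hi : i ∈ ℓ.d
      · simp [hi]
      · simp only [hi, dif_neg, not_false_iff]
        rw [← Category.assoc, hP _ p.2]
        simp [Category.assoc, reassoc_of% hh]
    obtain ⟨w, ⟨hw1, hw2⟩, _⟩ := huniv Y (fun ℓ => lineU ρ h ℓ i)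
      (fun e => (e i : X ⟶ Y)) compat
    exact ⟨w, hw1, hw2⟩
  refine ⟨main, fun ℓ i hi => ?_⟩
  obtain ⟨v, hv1, _⟩ := main i
  refine ⟨v, hv1, ?_⟩
  rw [hv1 ℓ]
  unfold lineU
  simp [hi]
end

section
/- Let 𝒞 be a category with all colimits, ℒ a 𝒞-language, i₀ : U → V a morphism of 𝒞, 𝒳 = (𝖷, π) a monic domain block and 𝒴 = (𝖸, ρ) a codomain block, and let h : V → X satisfy h ∘ i₀ ∘ π = Id_X. Let N > 0 and let P = Hom_{Bl^m_{i₀}}(𝒳, 𝒴), so every e ∈ P is an ℒ-homomorphism with ρ ∘ e = i₀ ∘ π and a left inverse in 𝒞. Let (Z, (f_ℓ)_ℓ, (f_ē)_ē) be a colimit cocone in 𝒞 over the underlying line diagram, and let σ : Z → V be the induced morphism satisfying σ ∘ f_ℓ = ρ for every line ℓ and σ ∘ f_ē = i₀ ∘ π for every ē ∈ P^N. For each relation symbol R of ℒ of arity r, define R^𝖹 on morphisms δ : r → Z by: R^𝖹(δ) holds if and only if there exist a combinatorial line ℓ in P^N and η : r → Y with δ = f_ℓ ∘ η and R^𝖸(η).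 Then for every combinatorial line ℓ in P^N, every relation symbol R of arity r, and every η : r → Y, one has R^𝖹(f_ℓ ∘ η) ⟺ R^𝖸(η). -/
open CategoryTheory

universe v u

/-- The interpretations `R^𝖹` of relation symbols on the colimit of the underlying line
diagram make every colimit leg `f_ℓ : 𝖸 ⟶ 𝖹` reflect and preserve relations:
`R^𝖹(f_ℓ ∘ η) ⟺ R^𝖸(η)`.

Here `𝒞` has all colimits, `𝒳 = (𝖷, π)` is a monic domain block, `𝒴 = (𝖸, ρ)` a
codomain block, `h ∘ i₀ ∘ π = Id_X`, `P = Hom_{Bl^m_{i₀}}(𝒳, 𝒴)`,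
`(Z, (f_ℓ)_ℓ, (f_ē)_ē)` is a colimit cocone in `𝒞` over the underlying line diagram
(tuples on a line `ℓ` are exactly the `ℓ.act p`, the diagram morphism `ē → ℓ` being
`ℓ(ē) = p`), `σ : Z ⟶ V` is the induced morphism with `σ ∘ f_ℓ = ρ` and
`σ ∘ f_ē = i₀ ∘ π`, and `R^𝖹(δ)` holds iff `δ = f_ℓ ∘ η` for some line `ℓ` and some
`η : r ⟶ Y` with `R^𝖸(η)`. -/
theorem rel_interp_on_colimit
    {C : Type u} [Category.{v} C] [Limits.HasColimits C]
    (L : CLanguage C) {U V : C} (i₀ : U ⟶ V)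
    (SX SY : LStr L) (π : SX.X ⟶ U) (ρ : SY.X ⟶ V) (hπ : HasLeftInv π)
    (h : V ⟶ SX.X) (hh : π ≫ i₀ ≫ h = 𝟙 SX.X)
    (N : ℕ) (hN : 0 < N)
    (P : Set (SX.X ⟶ SY.X))
    (hP : P = {e | IsLHom SX SY e ∧ e ≫ ρ = π ≫ i₀ ∧ HasLeftInv e})
    (Z : C) (fL : Line (↥P) N → (SY.X ⟶ Z)) (fE : (Fin N → ↥P) → (SX.X ⟶ Z))
    (hcocone : ∀ (ℓ : Line (↥P) N) (p : ↥P), (p : SX.X ⟶ SY.X) ≫ fL ℓ = fE (ℓ.act p))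
    (huniv : ∀ (W : C) (gL : Line (↥P) N → (SY.X ⟶ W))
      (gE : (Fin N → ↥P) → (SX.X ⟶ W)),
      (∀ (ℓ : Line (↥P) N) (p : ↥P), (p : SX.X ⟶ SY.X) ≫ gL ℓ = gE (ℓ.act p)) →
      ∃! w : Z ⟶ W, (∀ ℓ, fL ℓ ≫ w = gL ℓ) ∧ (∀ e, fE e ≫ w = gE e))
    (σ : Z ⟶ V)
    (hσL : ∀ ℓ : Line (↥P) N, fL ℓ ≫ σ = ρ)
    (hσE : ∀ e : Fin N → ↥P, fE e ≫ σ = π ≫ i₀)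
    (RZ : ∀ R : L.Rel, Set (L.arR R ⟶ Z))
    (hRZ : ∀ (R : L.Rel) (δ : L.arR R ⟶ Z), δ ∈ RZ R ↔
      ∃ (ℓ : Line (↥P) N) (η : L.arR R ⟶ SY.X), δ = η ≫ fL ℓ ∧ η ∈ SY.rel R) :
    ∀ (ℓ : Line (↥P) N) (R : L.Rel) (η : L.arR R ⟶ SY.X),
      (η ≫ fL ℓ) ∈ RZ R ↔ η ∈ SY.rel R := by
  -- key: for each coordinate k, there is a retraction-like map w : Z ⟶ SY.X
  classical
  -- for any c ∈ P, ρ ≫ h is a left inverse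
  have hli : ∀ c : ↥P, (c : SX.X ⟶ SY.X) ≫ ρ ≫ h = 𝟙 SX.X := by
    intro c
    have hcP : (c : SX.X ⟶ SY.X) ∈ {e | IsLHom SX SY e ∧ e ≫ ρ = π ≫ i₀ ∧
        HasLeftInv e} := hP ▸ c.2
    rw [← Category.assoc, hcP.2.1, Category.assoc, hh]
  have key : ∀ k : Fin N, ∃ w : Z ⟶ SY.X,
      ∀ ℓ'' : Line (↥P) N, fL ℓ'' ≫ w =
        if hk : k ∈ ℓ''.d then 𝟙 SY.X
        else ρ ≫ h ≫ ((ℓ''.fixed k hk : ↥P) : SX.X ⟶ SY.X) := by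
    intro k
    have hcomp : ∀ (ℓ'' : Line (↥P) N) (p : ↥P), (p : SX.X ⟶ SY.X) ≫
        (if hk : k ∈ ℓ''.d then 𝟙 SY.X
          else ρ ≫ h ≫ ((ℓ''.fixed k hk : ↥P) : SX.X ⟶ SY.X)) =
        ((ℓ''.act p k : ↥P) : SX.X ⟶ SY.X) := by
      intro ℓ'' p
      have hact : ℓ''.act p k = if hk : k ∈ ℓ''.d then p else ℓ''.fixed k hk := by
        simp [Line.act]
      by_cases hk : k ∈ ℓ''.d
      · simp [hact, hk]
      · simp only [hact, dif_neg hk]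
        have h2 := hli p
        rw [← Category.assoc] at h2
        rw [← Category.assoc, ← Category.assoc, h2, Category.id_comp]
    obtain ⟨w, ⟨hwL, _⟩, -⟩ := huniv SY.X
      (fun ℓ'' => if hk : k ∈ ℓ''.d then 𝟙 SY.X
        else ρ ≫ h ≫ ((ℓ''.fixed k hk : ↥P) : SX.X ⟶ SY.X))
      (fun t => ((t k : ↥P) : SX.X ⟶ SY.X)) (fun ℓ'' p => hcomp ℓ'' p)
    exact ⟨w, hwL⟩
  intro ℓ R η
  constructor
  · intro hmem
    rw [hRZ] at hmem
    obtain ⟨ℓ', η', heq, hη'⟩ := hmem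
    by_cases hcap : (ℓ.d ∩ ℓ'.d).Nonempty
    · obtain ⟨k, hk, hk'⟩ := hcap
      obtain ⟨w, hw⟩ := key k
      have : η ≫ fL ℓ ≫ w = η' ≫ fL ℓ' ≫ w := by
        rw [← Category.assoc, ← Category.assoc, heq]
      rw [hw ℓ, hw ℓ', dif_pos hk, dif_pos hk', Category.comp_id,
        Category.comp_id] at this
      rwa [this]
    · obtain ⟨k, hk⟩ := ℓ.d_nonempty
      obtain ⟨k', hk'⟩ := ℓ'.d_nonempty
      have hk2 : k ∉ ℓ'.d := fun hmm => hcap ⟨k, hk, hmm⟩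
      have hk'2 : k' ∉ ℓ.d := fun hmm => hcap ⟨k', hmm, hk'⟩
      obtain ⟨w, hw⟩ := key k
      obtain ⟨w', hw'⟩ := key k'
      set c : ↥P := ℓ'.fixed k hk2 with hc
      set c' : ↥P := ℓ.fixed k' hk'2 with hc'
      have e1 : η = η' ≫ ρ ≫ h ≫ (c : SX.X ⟶ SY.X) := by
        have : η ≫ fL ℓ ≫ w = η' ≫ fL ℓ' ≫ w := by
          rw [← Category.assoc, ← Category.assoc, heq]
        rwa [hw ℓ, hw ℓ', dif_pos hk, dif_neg hk2, Category.comp_id] at this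
      have e2 : η' = η ≫ ρ ≫ h ≫ (c' : SX.X ⟶ SY.X) := by
        have : η' ≫ fL ℓ' ≫ w' = η ≫ fL ℓ ≫ w' := by
          rw [← Category.assoc, ← Category.assoc, heq]
        rwa [hw' ℓ, hw' ℓ', dif_pos hk', dif_neg hk'2, Category.comp_id] at this
      have hcP : IsLHom SX SY (c : SX.X ⟶ SY.X) :=
        (show (c : SX.X ⟶ SY.X) ∈ {e | IsLHom SX SY e ∧ e ≫ ρ = π ≫ i₀ ∧
          HasLeftInv e} from hP ▸ c.2).1
      have hc'P : IsLHom SX SY (c' : SX.X ⟶ SY.X) :=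
        (show (c' : SX.X ⟶ SY.X) ∈ {e | IsLHom SX SY e ∧ e ≫ ρ = π ≫ i₀ ∧
          HasLeftInv e} from hP ▸ c'.2).1
      -- η ≫ ρ ≫ h ∈ SX.rel R, via c'
      have hX : (η ≫ ρ ≫ h) ∈ SX.rel R := by
        rw [hc'P.1 R (η ≫ ρ ≫ h)]
        have : (η ≫ ρ ≫ h) ≫ (c' : SX.X ⟶ SY.X) = η' := by
          rw [e2]; simp [Category.assoc]
        rwa [this]
      -- η' ≫ ρ ≫ h = η ≫ ρ ≫ h
      have e3 : η' ≫ ρ ≫ h = η ≫ ρ ≫ h := by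
        rw [e2]
        have : ((c' : SX.X ⟶ SY.X)) ≫ ρ ≫ h = 𝟙 SX.X := hli c'
        simp only [Category.assoc]
        rw [this, Category.comp_id]
      have e4 : η = (η ≫ ρ ≫ h) ≫ (c : SX.X ⟶ SY.X) := by
        rw [← e3, e1]; simp [Category.assoc]
      rw [e4]
      exact (hcP.1 R (η ≫ ρ ≫ h)).mp hX
  · intro hη
    rw [hRZ]
    exact ⟨ℓ, η, rfl, hη⟩
end
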